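/- arXiv:1911.08197 — 5 statements merged into one kernel-verified Lean document; each statement's English description precedes it below -/
import Mathlib

section
/- (Query complexity upper bound for top-m estimation, Theorem 7.) Fix 1 ≤ m < k and let T_m* = max over i ∈ {1,…,m} and j ∈ {m+1,…,k} of (592/3) · (p_i/(p_i−p_j)²) · log( (592/3) · sqrt(k/δ) · p_i/(p_i−p_j)² ). Then with probability at least 1 − δ, for every time t ≥ T_m* one has p̂_i^t − β_i^t > p̂_j^t + β_j^t simultaneously for all i ∈ {1,…,m} and all j ∈ {m+1,…,k}; in particular, the top-m stopping rule (m bins whose lower confidence bounds exceed the upper confidence bounds of all remaining bins) fires on the true top-m set within T_m* samples. -/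
open MeasureTheory ProbabilityTheory Real Finset


lemma TMX.exp_quad {x : ℝ} (hx : |x| ≤ 1) : Real.exp x ≤ 1 + x + (3/4) * x^2 := by
  have h := Real.exp_bound hx (n := 2) (by norm_num)
  have h2 : ∑ m ∈ Finset.range 2, x ^ m / m.factorial = 1 + x := by
    simp [Finset.sum_range_succ]
  rw [h2] at h
  have h3 := (abs_sub_le_iff.1 h).1
  have h4 : |x| ^ 2 = x ^ 2 := sq_abs x
  norm_num [h4] at h3
  nlinarith [sq_abs x]

lemma TMX.integrable_of_bound {Ω : Type*} [MeasurableSpace Ω] (μ : Measure Ω)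
    [IsProbabilityMeasure μ] {f : Ω → ℝ} (hf : Measurable f) (C : ℝ)
    (h : ∀ ω, |f ω| ≤ C) : Integrable f μ :=
  Integrable.mono' (integrable_const C) hf.aestronglyMeasurable
    (ae_of_all _ fun ω => by simpa [Real.norm_eq_abs] using h ω)

lemma TMX.mgf_ind {Ω : Type*} [MeasurableSpace Ω] (μ : Measure Ω)
    [IsProbabilityMeasure μ] {Z : Ω → ℝ} (hZ : Measurable Z)
    (h01 : ∀ ω, Z ω = 0 ∨ Z ω = 1) {p : ℝ}
    (hEZ : ∫ ω, Z ω ∂μ = p) (l : ℝ) :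
    mgf Z μ l = 1 + p * (Real.exp l - 1) := by
  have hpt : ∀ ω, Real.exp (l * Z ω) = 1 + (Real.exp l - 1) * Z ω := by
    intro ω
    rcases h01 ω with h | h <;> simp [h]
  have hint : Integrable Z μ := TMX.integrable_of_bound μ hZ 1 (fun ω => by
    rcases h01 ω with h | h <;> simp [h])
  rw [mgf]
  calc ∫ ω, Real.exp (l * Z ω) ∂μ = ∫ ω, (1 + (Real.exp l - 1) * Z ω) ∂μ := by
        simp_rw [hpt]
    _ = 1 + p * (Real.exp l - 1) := by
        rw [integral_add (integrable_const 1) (hint.const_mul _), integral_const,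
          integral_const_mul, hEZ]
        simp [mul_comm]


lemma TMX.chernoff_one {Ω : Type*} [MeasurableSpace Ω] (μ : Measure Ω)
    [IsProbabilityMeasure μ] (Z : ℕ → Ω → ℝ) (hmeas : ∀ n, Measurable (Z n))
    (h01 : ∀ n ω, Z n ω = 0 ∨ Z n ω = 1)
    (hindep : iIndepFun Z μ)
    {p : ℝ} (hp0 : 0 ≤ p) (hp1 : p ≤ 1) (hEZ : ∀ n, ∫ ω, Z n ω ∂μ = p)
    (t : ℕ) {l : ℝ} (hl0 : 0 ≤ l) (hl1 : l ≤ 1) (s : ℝ) :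
    (μ {ω | (t:ℝ) * p + s ≤ ∑ j ∈ range t, Z j ω} ≤
        ENNReal.ofReal (Real.exp (-l * s + (3/4) * t * p * l^2)) ∧
      μ {ω | ∑ j ∈ range t, Z j ω ≤ (t:ℝ) * p - s} ≤
        ENNReal.ofReal (Real.exp (-l * s + (3/4) * t * p * l^2))) := by
  have hZb : ∀ n ω, |Z n ω| ≤ 1 := fun n ω => by rcases h01 n ω with h | h <;> simp [h]
  have hSmeas : Measurable (fun ω => ∑ j ∈ range t, Z j ω) :=
    Finset.measurable_sum _ fun j _ => hmeas j
  have hmgf : ∀ l' : ℝ, |l'| ≤ 1 →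
      mgf (fun ω => ∑ j ∈ range t, Z j ω) μ l' ≤ Real.exp ((t:ℝ) * p * (l' + (3/4) * l'^2)) := by
    intro l' hl'
    have hfun : (fun ω => ∑ j ∈ range t, Z j ω) = ∑ j ∈ range t, Z j := by
      ext ω; simp
    rw [hfun, ProbabilityTheory.iIndepFun.mgf_sum (t := l') hindep hmeas (range t)]
    have hone : ∀ j, mgf (Z j) μ l' = 1 + p * (Real.exp l' - 1) :=
      fun j => TMX.mgf_ind μ (hmeas j) (h01 j) (hEZ j) l'
    calc ∏ j ∈ range t, mgf (Z j) μ l'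
        = (1 + p * (Real.exp l' - 1)) ^ t := by
          rw [Finset.prod_congr rfl fun j _ => hone j, Finset.prod_const, Finset.card_range]
      _ ≤ (Real.exp (p * (l' + (3/4) * l'^2))) ^ t := by
          apply pow_le_pow_left₀
          · nlinarith [Real.exp_pos l', Real.add_one_le_exp l']
          · have hq := TMX.exp_quad hl'
            have := Real.add_one_le_exp (p * (l' + (3/4) * l'^2))
            nlinarith
      _ = Real.exp ((t:ℝ) * p * (l' + (3/4) * l'^2)) := by
          rw [← Real.exp_nat_mul]; ring_nf
  have hintexp : ∀ l' : ℝ, Integrable (fun ω => Real.exp (l' * ∑ j ∈ range t, Z j ω)) μ := by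
    intro l'
    apply TMX.integrable_of_bound μ ((hSmeas.const_mul l').exp) (Real.exp (|l'| * t))
    intro ω
    rw [abs_of_pos (Real.exp_pos _)]
    apply Real.exp_le_exp.2
    have hS : |∑ j ∈ range t, Z j ω| ≤ t := by
      calc |∑ j ∈ range t, Z j ω| ≤ ∑ j ∈ range t, |Z j ω| := Finset.abs_sum_le_sum_abs _ _
        _ ≤ ∑ j ∈ range t, 1 := Finset.sum_le_sum fun j _ => hZb j ω
        _ = t := by simp
    calc l' * ∑ j ∈ range t, Z j ω ≤ |l' * ∑ j ∈ range t, Z j ω| := le_abs_self _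
      _ = |l'| * |∑ j ∈ range t, Z j ω| := abs_mul _ _
      _ ≤ |l'| * t := by gcongr
  have habs : |l| ≤ 1 := by rw [abs_of_nonneg hl0]; exact hl1
  have hneg : |(-l)| ≤ 1 := by rwa [abs_neg]
  constructor
  · have h1 := ProbabilityTheory.measure_ge_le_exp_mul_mgf (μ := μ)
      (X := fun ω => ∑ j ∈ range t, Z j ω) ((t:ℝ) * p + s) hl0 (hintexp l)
    have h2 := hmgf l habs
    have h3 : (μ {ω | (t:ℝ) * p + s ≤ ∑ j ∈ range t, Z j ω}).toReal ≤
        Real.exp (-l * s + (3/4) * t * p * l^2) := by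
      calc (μ {ω | (t:ℝ) * p + s ≤ ∑ j ∈ range t, Z j ω}).toReal
          ≤ Real.exp (-l * ((t:ℝ) * p + s)) * mgf (fun ω => ∑ j ∈ range t, Z j ω) μ l := h1
        _ ≤ Real.exp (-l * ((t:ℝ) * p + s)) * Real.exp ((t:ℝ) * p * (l + (3/4) * l^2)) := by
            gcongr
        _ = Real.exp (-l * s + (3/4) * t * p * l^2) := by
            rw [← Real.exp_add]; ring_nf
    calc μ {ω | (t:ℝ) * p + s ≤ ∑ j ∈ range t, Z j ω}
        = ENNReal.ofReal ((μ {ω | (t:ℝ) * p + s ≤ ∑ j ∈ range t, Z j ω}).toReal) :=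
          (ENNReal.ofReal_toReal (measure_ne_top μ _)).symm
      _ ≤ _ := ENNReal.ofReal_le_ofReal h3
  · have h1 := ProbabilityTheory.measure_le_le_exp_mul_mgf (μ := μ)
      (X := fun ω => ∑ j ∈ range t, Z j ω) ((t:ℝ) * p - s) (neg_nonpos.2 hl0) (hintexp (-l))
    have h2 := hmgf (-l) hneg
    have h3 : (μ {ω | ∑ j ∈ range t, Z j ω ≤ (t:ℝ) * p - s}).toReal ≤
        Real.exp (-l * s + (3/4) * t * p * l^2) := by
      calc (μ {ω | ∑ j ∈ range t, Z j ω ≤ (t:ℝ) * p - s}).toReal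
          ≤ Real.exp (-(-l) * ((t:ℝ) * p - s)) * mgf (fun ω => ∑ j ∈ range t, Z j ω) μ (-l) := h1
        _ ≤ Real.exp (l * ((t:ℝ) * p - s)) * Real.exp ((t:ℝ) * p * (-l + (3/4) * (-l)^2)) := by
            rw [neg_neg]; gcongr
        _ = Real.exp (-l * s + (3/4) * t * p * l^2) := by
            rw [← Real.exp_add]; ring_nf
    calc μ {ω | ∑ j ∈ range t, Z j ω ≤ (t:ℝ) * p - s}
        = ENNReal.ofReal ((μ {ω | ∑ j ∈ range t, Z j ω ≤ (t:ℝ) * p - s}).toReal) :=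
          (ENNReal.ofReal_toReal (measure_ne_top μ _)).symm
      _ ≤ _ := ENNReal.ofReal_le_ofReal h3
lemma TMX.conc {Ω : Type*} [MeasurableSpace Ω] (μ : Measure Ω)
    [IsProbabilityMeasure μ] (Z : ℕ → Ω → ℝ) (hmeas : ∀ n, Measurable (Z n))
    (h01 : ∀ n ω, Z n ω = 0 ∨ Z n ω = 1)
    (hindep : iIndepFun Z μ)
    {p : ℝ} (hp0 : 0 ≤ p) (hp1 : p ≤ 1) (hEZ : ∀ n, ∫ ω, Z n ω ∂μ = p)
    (t : ℕ) {L : ℝ} (hL : 0 < L) :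
    μ {ω | Real.sqrt (3 * t * p * L) + 2 * L ≤ |(∑ j ∈ range t, Z j ω) - t * p|} ≤
      ENNReal.ofReal (2 * Real.exp (-L)) := by
  set s : ℝ := Real.sqrt (3 * t * p * L) + 2 * L with hs_def
  have hsq : 0 ≤ Real.sqrt (3 * t * p * L) := Real.sqrt_nonneg _
  have hs_pos : 0 < s := by positivity
  have htp : 0 ≤ (t:ℝ) * p := by positivity
  -- choose l
  obtain ⟨l, hl0, hl1, hexp⟩ : ∃ l : ℝ, 0 ≤ l ∧ l ≤ 1 ∧
      -l * s + (3/4) * t * p * l^2 ≤ -L := by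
    by_cases hcase : 2 * s ≤ 3 * (t * p)
    · have htp0 : 0 < (t:ℝ) * p := by nlinarith
      refine ⟨2 * s / (3 * (t * p)), by positivity, by
        rw [div_le_one (by positivity)]; linarith, ?_⟩
      have h1 : -( 2 * s / (3 * (t * p))) * s + (3/4) * t * p * (2 * s / (3 * (t * p)))^2
          = - (s^2 / (3 * (t * p))) := by field_simp; ring
      rw [h1]
      have h2 : 3 * (t:ℝ) * p * L ≤ s^2 := by
        have : Real.sqrt (3 * t * p * L) ^ 2 = 3 * t * p * L := Real.sq_sqrt (by positivity)
        nlinarith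
      rw [neg_le_neg_iff, le_div_iff₀ (by positivity)]
      nlinarith
    · push_neg at hcase
      refine ⟨1, zero_le_one, le_refl 1, ?_⟩
      have h2 : 2 * L ≤ s := by nlinarith
      nlinarith
  obtain ⟨hup, hlo⟩ := TMX.chernoff_one μ Z hmeas h01 hindep hp0 hp1 hEZ t hl0 hl1 s
  have hsub : {ω | s ≤ |(∑ j ∈ range t, Z j ω) - t * p|} ⊆
      {ω | (t:ℝ) * p + s ≤ ∑ j ∈ range t, Z j ω} ∪
      {ω | ∑ j ∈ range t, Z j ω ≤ (t:ℝ) * p - s} := by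
    intro ω hω
    simp only [Set.mem_setOf_eq, Set.mem_union] at *
    rcases le_abs.1 hω with h | h
    · left; linarith
    · right; linarith
  calc μ {ω | s ≤ |(∑ j ∈ range t, Z j ω) - t * p|}
      ≤ μ ({ω | (t:ℝ) * p + s ≤ ∑ j ∈ range t, Z j ω} ∪
          {ω | ∑ j ∈ range t, Z j ω ≤ (t:ℝ) * p - s}) := measure_mono hsub
    _ ≤ μ {ω | (t:ℝ) * p + s ≤ ∑ j ∈ range t, Z j ω} +
        μ {ω | ∑ j ∈ range t, Z j ω ≤ (t:ℝ) * p - s} := measure_union_le _ _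
    _ ≤ ENNReal.ofReal (Real.exp (-l * s + (3/4) * t * p * l^2)) +
        ENNReal.ofReal (Real.exp (-l * s + (3/4) * t * p * l^2)) := add_le_add hup hlo
    _ ≤ ENNReal.ofReal (2 * Real.exp (-L)) := by
        rw [← ENNReal.ofReal_add (Real.exp_pos _).le (Real.exp_pos _).le]
        apply ENNReal.ofReal_le_ofReal
        have := Real.exp_le_exp.2 hexp
        linarith
lemma TMX.pairsum_le (Z : ℕ → ℝ) (h01 : ∀ n, Z n = 0 ∨ Z n = 1) (t : ℕ) :
    ∑ q ∈ range t, ∑ p ∈ range q, (Z p - Z q)^2 ≤ ((t:ℝ) - 1) * ∑ p ∈ range t, Z p := by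
  induction t with
  | zero => simp
  | succ t ih =>
    rw [Finset.sum_range_succ, Finset.sum_range_succ (f := Z)]
    have hZt : 0 ≤ Z t ∧ Z t ≤ 1 := by rcases h01 t with h | h <;> simp [h]
    have hS0 : 0 ≤ ∑ p ∈ range t, Z p :=
      Finset.sum_nonneg fun p _ => by rcases h01 p with h | h <;> simp [h]
    have hstep : ∑ p ∈ range t, (Z p - Z t)^2 ≤ (∑ p ∈ range t, Z p) + t * Z t := by
      calc ∑ p ∈ range t, (Z p - Z t)^2 ≤ ∑ p ∈ range t, (Z p + Z t) := by
            apply Finset.sum_le_sum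
            intro p _
            rcases h01 p with h | h <;> rcases h01 t with h' | h' <;> simp [h, h'] <;> norm_num
        _ = (∑ p ∈ range t, Z p) + t * Z t := by
            rw [Finset.sum_add_distrib, Finset.sum_const, Finset.card_range]; simp [mul_comm]
    push_cast
    nlinarith [ih]
lemma TMX.log_le_div_e {x : ℝ} (hx : 0 < x) : Real.log x ≤ x / Real.exp 1 := by
  have h := Real.log_le_sub_one_of_pos (x := x / Real.exp 1) (by positivity)
  rw [Real.log_div hx.ne' (Real.exp_pos 1).ne', Real.log_exp] at h
  linarith

set_option maxHeartbeats 2000000 in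
lemma TMX.log_thresh {k : ℕ} {δ pi Δ : ℝ} (t : ℕ) (hk : 2 ≤ k) (hδ0 : 0 < δ) (hδ1 : δ < 1)
    (hΔ : 0 < Δ) (hΔpi : Δ ≤ pi) (hpi1 : pi ≤ 1)
    (hT : (592/3) * (pi/Δ^2) * Real.log ((592/3) * Real.sqrt ((k:ℝ)/δ) * (pi/Δ^2)) ≤ (t:ℝ)) :
    987 ≤ t ∧ 0 < Real.log (4*(k:ℝ)*(t:ℝ)^2/δ) ∧
      Real.log (4*(k:ℝ)*(t:ℝ)^2/δ) ≤ (183/11840) * ((t:ℝ) * Δ^2 / pi) := by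
  have hpi0 : 0 < pi := lt_of_lt_of_le hΔ hΔpi
  set a : ℝ := (592/3) * (pi/Δ^2) with ha_def
  set b : ℝ := Real.sqrt ((k:ℝ)/δ) with hb_def
  have hk2 : (2:ℝ) ≤ (k:ℝ) := by exact_mod_cast hk
  have hkδ : 2 ≤ (k:ℝ)/δ := by
    rw [le_div_iff₀ hδ0]; nlinarith
  have hb2 : (1.4:ℝ) ≤ b := by
    rw [hb_def, show (1.4:ℝ) = Real.sqrt (1.96) by
      rw [show (1.96:ℝ) = 1.4^2 by norm_num, Real.sqrt_sq (by norm_num)]]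
    exact Real.sqrt_le_sqrt (by linarith)
  have hratio : 1 ≤ pi/Δ^2 := by
    rw [le_div_iff₀ (by positivity)]
    nlinarith
  have ha : (592/3 : ℝ) ≤ a := by
    rw [ha_def]; nlinarith
  have ha0 : 0 < a := lt_of_lt_of_le (by norm_num) ha
  have hab : Real.exp 5 ≤ a * b := by
    have h1 : Real.exp 5 ≤ 148.42 := by
      have h2 : Real.exp 5 = Real.exp 1 ^ 5 := by
        rw [← Real.exp_nat_mul]; norm_num
      have h4 : Real.exp 1 ^ 5 < (2.7182818286:ℝ)^5 :=
        pow_lt_pow_left₀ Real.exp_one_lt_d9 (Real.exp_pos 1).le (by norm_num)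
      have h5 : (2.7182818286:ℝ)^5 ≤ 148.42 := by norm_num
      rw [h2]; linarith
    nlinarith
  have hab0 : 0 < a * b := lt_of_lt_of_le (Real.exp_pos 5) hab
  have hb0 : 0 < b := by positivity
  have hlogab : 5 ≤ Real.log (a * b) := by
    rw [← Real.log_exp 5]
    exact Real.log_le_log (Real.exp_pos 5) hab
  have hT' : a * Real.log (a * b) ≤ (t:ℝ) := by
    calc a * Real.log (a * b) = (592/3) * (pi/Δ^2) *
        Real.log ((592/3) * b * (pi/Δ^2)) := by rw [ha_def]; ring_nf
      _ ≤ (t:ℝ) := hT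
  have hta : 5 * a ≤ (t:ℝ) := by nlinarith
  have ht987 : 987 ≤ t := by
    have : (986.6:ℝ) ≤ (t:ℝ) := by nlinarith [hta, ha]
    by_contra h
    push_neg at h
    have : (t:ℝ) ≤ 986 := by exact_mod_cast Nat.le_of_lt_succ h
    linarith
  have ht0 : (0:ℝ) < (t:ℝ) := by nlinarith
  refine ⟨ht987, ?_, ?_⟩
  · apply Real.log_pos
    rw [lt_div_iff₀ hδ0]
    nlinarith
  · set X : ℝ := (t:ℝ)/a with hX_def
    have hX5 : 5 ≤ X := by rw [hX_def, le_div_iff₀ ha0]; linarith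
    have hsplit : Real.log (4*(k:ℝ)*(t:ℝ)^2/δ) =
        Real.log 4 + 2*Real.log b + 2*Real.log (t:ℝ) := by
      have hkδb : (k:ℝ)/δ = b^2 := (Real.sq_sqrt (by positivity)).symm
      rw [show 4*(k:ℝ)*(t:ℝ)^2/δ = 4 * ((k:ℝ)/δ) * (t:ℝ)^2 by field_simp]
      rw [Real.log_mul (by positivity) (by positivity),
        Real.log_mul (by norm_num) (by positivity), hkδb, Real.log_pow, Real.log_pow]
      push_cast; ring
    have hlogab_le : Real.log a + Real.log b ≤ X := by
      rw [← Real.log_mul ha0.ne' hb0.ne', hX_def, le_div_iff₀ ha0]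
      nlinarith [hT']
    have hlogt : Real.log (t:ℝ) - Real.log a ≤ X / Real.exp 1 := by
      have h1 := TMX.log_le_div_e (x := (t:ℝ)/a) (by positivity)
      rw [Real.log_div ht0.ne' ha0.ne'] at h1
      exact h1
    have hlog4 : Real.log 4 ≤ 1.3863 := by
      rw [show (4:ℝ) = 2^2 by norm_num, Real.log_pow]
      have := Real.log_two_lt_d9
      push_cast
      nlinarith
    have hE : (2.7182818283:ℝ) < Real.exp 1 := Real.exp_one_gt_d9
    have hXE : 2 * (X / Real.exp 1) ≤ 0.7358 * X := by
      have h1 : 2 * (X / Real.exp 1) = (2*X) / Real.exp 1 := by ring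
      rw [h1, div_le_iff₀ (Real.exp_pos 1)]
      nlinarith
    have hfin : Real.log (4*(k:ℝ)*(t:ℝ)^2/δ) ≤ (61/20) * X := by
      rw [hsplit]
      nlinarith
    have heq : (61/20) * X = (183/11840) * ((t:ℝ) * Δ^2 / pi) := by
      rw [hX_def, ha_def]
      field_simp
      ring
    linarith
set_option maxHeartbeats 2000000 in
lemma TMX.det_sep {pi pj phati phatj Vi Vj L : ℝ} (t : ℕ)
    (h987 : 987 ≤ t)
    (hpj0 : 0 ≤ pj) (hΔ : pj < pi) (hpi1 : pi ≤ 1)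
    (hL : 0 < L)
    (hLt : L ≤ (183/11840) * ((t:ℝ) * (pi - pj)^2 / pi))
    (hdevi : |phati - pi| ≤ Real.sqrt (3 * pi * L / t) + 2 * L / t)
    (hdevj : |phatj - pj| ≤ Real.sqrt (3 * pj * L / t) + 2 * L / t)
    (hVi0 : 0 ≤ Vi) (hVj0 : 0 ≤ Vj) (hVi : Vi ≤ phati) (hVj : Vj ≤ phatj) :
    phatj + (Real.sqrt (2 * Vj * L / t) + 7 * L / (3 * ((t:ℝ) - 1))) <
      phati - (Real.sqrt (2 * Vi * L / t) + 7 * L / (3 * ((t:ℝ) - 1))) := by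
  set Δ : ℝ := pi - pj with hΔ_def
  have hΔ0 : 0 < Δ := by simp [hΔ_def]; linarith
  have hpi0 : 0 < pi := by linarith
  have hΔpi : Δ ≤ pi := by simp [hΔ_def]; linarith
  have htR : (987:ℝ) ≤ (t:ℝ) := by exact_mod_cast h987
  have ht0 : (0:ℝ) < (t:ℝ) := by linarith
  -- main quantitative consequence of hLt
  have huc : L * pi ≤ (183/11840) * ((t:ℝ) * Δ^2) := by
    calc L * pi ≤ ((183:ℝ)/11840) * ((t:ℝ) * Δ^2 / pi) * pi :=
          mul_le_mul_of_nonneg_right hLt hpi0.le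
      _ = (183/11840) * ((t:ℝ) * Δ^2) := by field_simp
  have hLΔt : L ≤ (183/11840) * (Δ * (t:ℝ)) := by
    have h1 : L * Δ ≤ (183/11840) * (Δ * (t:ℝ)) * Δ := by nlinarith
    exact le_of_mul_le_mul_right h1 hΔ0
  -- bound on the deviation sqrt terms
  have hc3 : 3 * pi * L / (t:ℝ) ≤ (0.2154*Δ)^2 := by
    rw [div_le_iff₀ ht0]
    nlinarith [mul_nonneg (mul_nonneg hΔ0.le hΔ0.le) ht0.le]
  have hs1 : Real.sqrt (3 * pi * L / t) ≤ 0.2154*Δ := by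
    have := Real.sqrt_le_sqrt hc3
    rwa [Real.sqrt_sq (by positivity)] at this
  have hc3j : 3 * pj * L / (t:ℝ) ≤ (0.2154*Δ)^2 := by
    rw [div_le_iff₀ ht0]
    nlinarith [mul_nonneg (mul_nonneg hΔ0.le hΔ0.le) ht0.le, mul_le_mul_of_nonneg_left
      (show pj ≤ pi by linarith) hL.le]
  have hs1j : Real.sqrt (3 * pj * L / t) ≤ 0.2154*Δ := by
    have := Real.sqrt_le_sqrt hc3j
    rwa [Real.sqrt_sq (by positivity)] at this
  have h2u : 2 * L / (t:ℝ) ≤ 0.0310*Δ := by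
    rw [div_le_iff₀ ht0]
    nlinarith [mul_le_mul_of_nonneg_left htR hΔ0.le]
  -- deviation bounds
  have hdevi' : |phati - pi| ≤ 0.2464*Δ := by
    refine hdevi.trans ?_
    linarith
  have hdevj' : |phatj - pj| ≤ 0.2464*Δ := by
    refine hdevj.trans ?_
    linarith
  obtain ⟨hdevi1, hdevi2⟩ := abs_le.1 hdevi'
  obtain ⟨hdevj1, hdevj2⟩ := abs_le.1 hdevj'
  -- empirical-variance sqrt terms
  have hVib : 2 * Vi * L / (t:ℝ) ≤ (0.1964*Δ)^2 := by
    rw [div_le_iff₀ ht0]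
    have hphati : Vi ≤ pi + 0.2464*Δ := by linarith
    nlinarith [mul_nonneg (mul_nonneg hΔ0.le hΔ0.le) ht0.le,
      mul_le_mul_of_nonneg_right hphati hL.le]
  have hVjb : 2 * Vj * L / (t:ℝ) ≤ (0.1964*Δ)^2 := by
    rw [div_le_iff₀ ht0]
    have hphatj : Vj ≤ pi + 0.2464*Δ := by linarith
    nlinarith [mul_nonneg (mul_nonneg hΔ0.le hΔ0.le) ht0.le,
      mul_le_mul_of_nonneg_right hphatj hL.le]
  have hsVi : Real.sqrt (2 * Vi * L / t) ≤ 0.1964*Δ := by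
    have := Real.sqrt_le_sqrt hVib
    rwa [Real.sqrt_sq (by positivity)] at this
  have hsVj : Real.sqrt (2 * Vj * L / t) ≤ 0.1964*Δ := by
    have := Real.sqrt_le_sqrt hVjb
    rwa [Real.sqrt_sq (by positivity)] at this
  -- deterministic radius term
  have h7 : 7 * L / (3 * ((t:ℝ) - 1)) ≤ 0.03611*Δ := by
    rw [div_le_iff₀ (by linarith)]
    nlinarith [mul_le_mul_of_nonneg_left htR hΔ0.le]
  linarith
lemma TMX.teles_eq (c : ℝ) (N : ℕ) :
    ∑ t ∈ range (N+2), (if 2 ≤ t then c / ((t:ℝ) * ((t:ℝ)-1)) else 0)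
      = c * (1 - 1/((N:ℝ)+1)) := by
  induction N with
  | zero => norm_num [Finset.sum_range_succ]
  | succ N ih =>
    rw [Finset.sum_range_succ, ih, if_pos (by omega)]
    have h1 : ((N:ℝ)+1) ≠ 0 := by positivity
    have h2 : ((N:ℝ)+2) ≠ 0 := by positivity
    push_cast
    have key : c / (((N:ℝ)+2) * (((N:ℝ)+2)-1)) = c/((N:ℝ)+1) - c/((N:ℝ)+2) := by
      rw [div_sub_div _ _ h1 h2,
        show ((N:ℝ)+2) * (((N:ℝ)+2)-1) = ((N:ℝ)+1)*((N:ℝ)+2) by ring]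
      congr 1
      ring
    rw [key]
    field_simp
    ring

lemma TMX.sum_r_le (c : ℝ) (hc : 0 ≤ c) (M : ℕ) :
    ∑ t ∈ range M, (if 2 ≤ t then c / ((t:ℝ) * ((t:ℝ)-1)) else 0) ≤ c := by
  match M with
  | 0 => simpa using hc
  | 1 => simpa using hc
  | (N+2) =>
    rw [TMX.teles_eq]
    have h1 : 0 < ((N:ℝ)+1) := by positivity
    have h2 : 0 ≤ 1/((N:ℝ)+1) := by positivity
    nlinarith
/-- Indicator `Z^i_t = 1 {X t = i}`, empirical frequency
`p̂_i^t = (1/t) Σ_{j<t} Z^i_j` (samples indexed from `0`). -/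
noncomputable def empFreq {Ω : Type*} {k : ℕ} (X : ℕ → Ω → Fin k) (i : Fin k) (t : ℕ)
    (ω : Ω) : ℝ :=
  (∑ j ∈ Finset.range t, if X j ω = i then (1 : ℝ) else 0) / (t : ℝ)

/-- Empirical variance `V_t(Z^i) = (1/(t(t−1))) Σ_{p<q<t} (Z^i_p − Z^i_q)²`. -/
noncomputable def empVar {Ω : Type*} {k : ℕ} (X : ℕ → Ω → Fin k) (i : Fin k) (t : ℕ)
    (ω : Ω) : ℝ :=
  (∑ q ∈ Finset.range t, ∑ p ∈ Finset.range q,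
      ((if X p ω = i then (1 : ℝ) else 0) - (if X q ω = i then (1 : ℝ) else 0)) ^ 2) /
    ((t : ℝ) * ((t : ℝ) - 1))

/-- Confidence radius
`β_i^t = sqrt(2 V_t(Z^i) log(4kt²/δ)/t) + 7 log(4kt²/δ)/(3(t−1))`. -/
noncomputable def confRadius {Ω : Type*} {k : ℕ} (δ : ℝ) (X : ℕ → Ω → Fin k) (i : Fin k)
    (t : ℕ) (ω : Ω) : ℝ :=
  Real.sqrt (2 * empVar X i t ω * Real.log (4 * (k : ℝ) * (t : ℝ) ^ 2 / δ) / (t : ℝ)) +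
    7 * Real.log (4 * (k : ℝ) * (t : ℝ) ^ 2 / δ) / (3 * ((t : ℝ) - 1))

/-- (Query complexity upper bound for top-`m` estimation, Theorem 7.) Let
`T_m* = max_{i ≤ m < j} (592/3)·(p_i/(p_i−p_j)²)·log((592/3)·sqrt(k/δ)·p_i/(p_i−p_j)²)`.
With probability at least `1 − δ`, at every time `t ≥ T_m*` (i.e. every `t` dominating all
the pairwise thresholds) one has `p̂_i^t − β_i^t > p̂_j^t + β_j^t` simultaneously for all
`i ∈ {1,…,m}` and `j ∈ {m+1,…,k}` (indices `i.val < m ≤ j.val` in `Fin k`); in particular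
the top-`m` stopping rule fires on the true top-`m` set within `T_m*` samples. -/
theorem topm_query_complexity_upper {Ω : Type*} [MeasurableSpace Ω] (μ : Measure Ω)
    [IsProbabilityMeasure μ] (k m : ℕ) (hk : 2 ≤ k) (hm1 : 1 ≤ m) (hmk : m < k)
    (δ : ℝ) (hδ0 : 0 < δ) (hδ1 : δ < 1)
    (p : Fin k → ℝ) (hp0 : ∀ i, 0 ≤ p i) (hp1 : ∑ i, p i = 1)
    (hsort : ∀ i j : Fin k, i < j → p j < p i)
    (X : ℕ → Ω → Fin k) (hmeas : ∀ t, Measurable (X t))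
    (hindep : iIndepFun X μ)
    (hlaw : ∀ t i, μ {ω | X t ω = i} = ENNReal.ofReal (p i)) :
    ENNReal.ofReal (1 - δ) ≤
      μ {ω | ∀ t : ℕ,
        (∀ i j : Fin k, (i : ℕ) < m → m ≤ (j : ℕ) →
          (592 / 3) * (p i / (p i - p j) ^ 2) *
              Real.log ((592 / 3) * Real.sqrt ((k : ℝ) / δ) * (p i / (p i - p j) ^ 2)) ≤
            (t : ℝ)) →
        ∀ i j : Fin k, (i : ℕ) < m → m ≤ (j : ℕ) →
          empFreq X j t ω + confRadius δ X j t ω <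
            empFreq X i t ω - confRadius δ X i t ω} := by
  classical
  have hkR : (2:ℝ) ≤ (k:ℝ) := by exact_mod_cast hk
  have hk0 : (0:ℝ) < (k:ℝ) := by linarith
  have hp_le1 : ∀ i, p i ≤ 1 := by
    intro i
    rw [← hp1]
    exact Finset.single_le_sum (fun j _ => hp0 j) (Finset.mem_univ i)
  set L : ℕ → ℝ := fun t => Real.log (4 * (k:ℝ) * (t:ℝ)^2 / δ) with hL_def
  set Z : Fin k → ℕ → Ω → ℝ := fun i n ω => if X n ω = i then 1 else 0 with hZ_def
  have hZmeas : ∀ i n, Measurable (Z i n) := fun i n =>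
    Measurable.ite (hmeas n (measurableSet_singleton i)) measurable_const measurable_const
  have hZ01 : ∀ i n ω, Z i n ω = 0 ∨ Z i n ω = 1 := by
    intro i n ω
    by_cases h : X n ω = i <;> simp [hZ_def, h]
  have hZindep : ∀ i, iIndepFun (Z i) μ := fun i =>
    hindep.comp (fun _ (x : Fin k) => if x = i then (1:ℝ) else 0)
      (fun _ => measurable_of_countable _)
  have hEZ : ∀ i n, ∫ ω, Z i n ω ∂μ = p i := by
    intro i n
    have hset : MeasurableSet {ω | X n ω = i} := hmeas n (measurableSet_singleton i)
    have heq : (fun ω => Z i n ω) = Set.indicator {ω | X n ω = i} (fun _ => (1:ℝ)) := by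
      ext ω
      by_cases h : X n ω = i <;> simp [hZ_def, h, Set.indicator_apply]
    rw [heq, MeasureTheory.integral_indicator_const (1:ℝ) hset, measureReal_def, hlaw n i, smul_eq_mul,
      mul_one, ENNReal.toReal_ofReal (hp0 i)]
  set A : Fin k → ℕ → Set Ω := fun i t =>
    if 2 ≤ t then
      {ω | Real.sqrt (3 * (t:ℝ) * p i * L t) + 2 * L t ≤
        |(∑ n ∈ Finset.range t, Z i n ω) - (t:ℝ) * p i|}
    else (∅ : Set Ω) with hA_def
  have hAmeas : ∀ i t, MeasurableSet (A i t) := by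
    intro i t
    simp only [hA_def]
    split
    · exact measurableSet_le measurable_const
        (((Finset.measurable_sum _ fun n _ => hZmeas i n).sub measurable_const).abs)
    · exact MeasurableSet.empty
  have hLpos2 : ∀ t : ℕ, 2 ≤ t → 0 < L t := by
    intro t ht
    apply Real.log_pos
    rw [lt_div_iff₀ hδ0]
    have h1 : (2:ℝ) ≤ (t:ℝ) := by exact_mod_cast ht
    nlinarith
  have hAbound : ∀ i t, μ (A i t) ≤
      ENNReal.ofReal (if 2 ≤ t then (δ/(2*(k:ℝ))) / ((t:ℝ) * ((t:ℝ)-1)) else 0) := by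
    intro i t
    simp only [hA_def]
    split
    case isTrue ht =>
      have h1 := TMX.conc μ (Z i) (hZmeas i) (hZ01 i) (hZindep i) (hp0 i) (hp_le1 i)
        (hEZ i) t (hLpos2 t ht)
      refine h1.trans (ENNReal.ofReal_le_ofReal ?_)
      have htR : (2:ℝ) ≤ (t:ℝ) := by exact_mod_cast ht
      have harg : (0:ℝ) < 4 * (k:ℝ) * (t:ℝ)^2 / δ := by positivity
      have h2 : 2 * Real.exp (-(L t)) = δ/(2*(k:ℝ)*(t:ℝ)^2) := by
        simp only [hL_def]
        rw [Real.exp_neg, Real.exp_log harg]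
        field_simp
        ring
      rw [h2, div_div]
      have hden : (0:ℝ) < (t:ℝ) * ((t:ℝ)-1) := by nlinarith
      apply div_le_div_of_nonneg_left hδ0.le
      · exact mul_pos (by linarith) hden
      · nlinarith
    case isFalse ht =>
      simp
  set B : Set Ω := ⋃ i, ⋃ t, A i t with hB_def
  have hBmeas : MeasurableSet B :=
    MeasurableSet.iUnion fun i => MeasurableSet.iUnion fun t => hAmeas i t
  have hBbound : μ B ≤ ENNReal.ofReal (δ/2) := by
    have hinner : ∀ i : Fin k, μ (⋃ t, A i t) ≤ ENNReal.ofReal (δ/(2*(k:ℝ))) := by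
      intro i
      refine (measure_iUnion_le _).trans ?_
      rw [ENNReal.tsum_eq_iSup_sum]
      refine iSup_le fun s => ?_
      obtain ⟨N, hN⟩ := Finset.exists_nat_subset_range s
      calc ∑ t ∈ s, μ (A i t) ≤ ∑ t ∈ Finset.range N, μ (A i t) :=
            Finset.sum_le_sum_of_subset hN
        _ ≤ ∑ t ∈ Finset.range N,
              ENNReal.ofReal (if 2 ≤ t then (δ/(2*(k:ℝ))) / ((t:ℝ) * ((t:ℝ)-1)) else 0) :=
            Finset.sum_le_sum fun t _ => hAbound i t
        _ = ENNReal.ofReal (∑ t ∈ Finset.range N,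
              if 2 ≤ t then (δ/(2*(k:ℝ))) / ((t:ℝ) * ((t:ℝ)-1)) else 0) := by
            rw [ENNReal.ofReal_sum_of_nonneg]
            intro t _
            split_ifs with h
            · have htR : (2:ℝ) ≤ (t:ℝ) := by exact_mod_cast h
              apply div_nonneg (by positivity)
              nlinarith
            · exact le_refl 0
        _ ≤ ENNReal.ofReal (δ/(2*(k:ℝ))) :=
            ENNReal.ofReal_le_ofReal (TMX.sum_r_le _ (by positivity) N)
    calc μ B ≤ ∑' i : Fin k, μ (⋃ t, A i t) := measure_iUnion_le _
      _ ≤ ∑' (j : Fin k), ENNReal.ofReal (δ/(2*(k:ℝ))) := ENNReal.tsum_le_tsum hinner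
      _ = (k : ENNReal) * ENNReal.ofReal (δ/(2*(k:ℝ))) := by
          rw [tsum_fintype]
          simp [Finset.sum_const, Fintype.card_fin, nsmul_eq_mul]
      _ = ENNReal.ofReal (δ/2) := by
          rw [show ((k:ℕ) : ENNReal) = ENNReal.ofReal ((k:ℕ) : ℝ) by
              rw [ENNReal.ofReal_natCast],
            ← ENNReal.ofReal_mul (by positivity)]
          congr 1
          field_simp
  have hsubset : Bᶜ ⊆ {ω | ∀ t : ℕ,
        (∀ i j : Fin k, (i : ℕ) < m → m ≤ (j : ℕ) →
          (592 / 3) * (p i / (p i - p j) ^ 2) *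
              Real.log ((592 / 3) * Real.sqrt ((k : ℝ) / δ) * (p i / (p i - p j) ^ 2)) ≤
            (t : ℝ)) →
        ∀ i j : Fin k, (i : ℕ) < m → m ≤ (j : ℕ) →
          empFreq X j t ω + confRadius δ X j t ω <
            empFreq X i t ω - confRadius δ X i t ω} := by
    intro ω hω
    simp only [hB_def, Set.mem_compl_iff, Set.mem_iUnion, not_exists] at hω
    intro t hTt i j hi hj
    have hij : p j < p i := hsort i j (by rw [Fin.lt_def]; omega)
    have hΔ0 : 0 < p i - p j := by linarith
    obtain ⟨h987, hLpos, hLle⟩ := TMX.log_thresh (k := k) (δ := δ) (pi := p i)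
      (Δ := p i - p j) t hk hδ0 hδ1 hΔ0 (by nlinarith [hp0 j]) (hp_le1 i) (hTt i j hi hj)
    have ht2 : 2 ≤ t := by omega
    have htR : (987:ℝ) ≤ (t:ℝ) := by exact_mod_cast h987
    have ht0 : (0:ℝ) < (t:ℝ) := by linarith
    have hdev : ∀ l : Fin k, |empFreq X l t ω - p l| ≤
        Real.sqrt (3 * p l * L t / t) + 2 * L t / t := by
      intro l
      have hnot := hω l t
      simp only [hA_def] at hnot
      simp only [if_pos ht2, Set.mem_setOf_eq, not_le] at hnot
      have hlt : |(∑ n ∈ Finset.range t, Z l n ω) - (t:ℝ) * p l| ≤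
          Real.sqrt (3 * (t:ℝ) * p l * L t) + 2 * L t := le_of_lt hnot
      have hfe : empFreq X l t ω - p l =
          ((∑ n ∈ Finset.range t, Z l n ω) - (t:ℝ) * p l) / t := by
        rw [empFreq, hZ_def]
        field_simp
      rw [hfe, abs_div, abs_of_pos ht0]
      have hsqrt_id : Real.sqrt (3 * p l * L t / t) =
          Real.sqrt (3 * (t:ℝ) * p l * L t) / t := by
        rw [show 3 * p l * L t / (t:ℝ) = (3 * (t:ℝ) * p l * L t) / (t:ℝ)^2 by
            field_simp,
          Real.sqrt_div (mul_nonneg (mul_nonneg (by positivity) (hp0 l)) hLpos.le), Real.sqrt_sq ht0.le]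
      rw [hsqrt_id]
      calc |(∑ n ∈ Finset.range t, Z l n ω) - (t:ℝ) * p l| / t
          ≤ (Real.sqrt (3 * (t:ℝ) * p l * L t) + 2 * L t) / t := by gcongr
        _ = Real.sqrt (3 * (t:ℝ) * p l * L t) / t + 2 * L t / t := by rw [add_div]
    have hden : (0:ℝ) < (t:ℝ) * ((t:ℝ) - 1) := by nlinarith
    have hV0 : ∀ l : Fin k, 0 ≤ empVar X l t ω := by
      intro l
      apply div_nonneg _ hden.le
      apply Finset.sum_nonneg
      intro q _
      apply Finset.sum_nonneg
      intro r _
      positivity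
    have hVle : ∀ l : Fin k, empVar X l t ω ≤ empFreq X l t ω := by
      intro l
      have hnum := TMX.pairsum_le (fun n => if X n ω = l then (1:ℝ) else 0)
        (fun n => by by_cases h : X n ω = l <;> simp [h]) t
      rw [empVar, empFreq, div_le_div_iff₀ hden ht0]
      nlinarith [mul_le_mul_of_nonneg_right hnum ht0.le,
        Finset.sum_nonneg (s := Finset.range t)
          (f := fun n => if X n ω = l then (1:ℝ) else 0)
          (fun n _ => by by_cases h : X n ω = l <;> simp [h])]
    have hfinal := TMX.det_sep (pi := p i) (pj := p j) (phati := empFreq X i t ω)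
      (phatj := empFreq X j t ω) (Vi := empVar X i t ω) (Vj := empVar X j t ω)
      (L := L t) t h987 (hp0 j) hij (hp_le1 i) hLpos hLle (hdev i) (hdev j)
      (hV0 i) (hV0 j) (hVle i) (hVle j)
    simpa only [confRadius, hL_def] using hfinal
  refine le_trans ?_ (measure_mono hsubset)
  rw [prob_compl_eq_one_sub hBmeas]
  have h1 : ENNReal.ofReal (1 - δ) ≤ 1 - ENNReal.ofReal (δ/2) := by
    rw [← ENNReal.ofReal_one, ← ENNReal.ofReal_sub _ (by positivity)]
    exact ENNReal.ofReal_le_ofReal (by linarith)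
  exact h1.trans (tsub_le_tsub_left hBbound 1)
end

section
/- (KL bound for the perturbed distribution in the lower-bound proof.) Let 0 < b < a be real numbers with a + b ≤ 1, let q = (a+b)/2, and let 0 < ε < q. Then a·log(a/(q−ε)) + b·log(b/(q+ε)) ≤ (a+b)·(a−b+2ε)² / ((a+b+2ε)·(a+b−2ε)). -/
/-- (KL bound for the perturbed distribution in the lower-bound proof.)
Let `0 < b < a` with `a + b ≤ 1`, let `q = (a+b)/2`, and `0 < ε < q`. Then
`a·log(a/(q−ε)) + b·log(b/(q+ε)) ≤ (a+b)·(a−b+2ε)² / ((a+b+2ε)·(a+b−2ε))`. -/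
theorem kl_perturbed_bound (a b q ε : ℝ) (hb : 0 < b) (hba : b < a) (hab : a + b ≤ 1)
    (hq : q = (a + b) / 2) (hε0 : 0 < ε) (hεq : ε < q) :
    a * Real.log (a / (q - ε)) + b * Real.log (b / (q + ε)) ≤
      (a + b) * (a - b + 2 * ε) ^ 2 / ((a + b + 2 * ε) * (a + b - 2 * ε)) := by
  have ha : 0 < a := hb.trans hba
  have hqε : 0 < q - ε := by linarith
  have hqε' : 0 < q + ε := by linarith
  have h1 : Real.log (a / (q - ε)) ≤ a / (q - ε) - 1 :=
    Real.log_le_sub_one_of_pos (by positivity)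
  have h2 : Real.log (b / (q + ε)) ≤ b / (q + ε) - 1 :=
    Real.log_le_sub_one_of_pos (by positivity)
  have key : a * (a / (q - ε) - 1) + b * (b / (q + ε) - 1) =
      (a + b) * (a - b + 2 * ε) ^ 2 / ((a + b + 2 * ε) * (a + b - 2 * ε)) := by
    subst hq
    have h3 : (a + b) / 2 - ε ≠ 0 := ne_of_gt hqε
    have h4 : (a + b) / 2 + ε ≠ 0 := ne_of_gt hqε'
    have h5 : a + b + 2 * ε ≠ 0 := by linarith [hqε'.le]
    have h6 : a + b - 2 * ε ≠ 0 := by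
      have : 0 < a + b - 2 * ε := by linarith
      exact ne_of_gt this
    field_simp
    ring
  calc a * Real.log (a / (q - ε)) + b * Real.log (b / (q + ε))
      ≤ a * (a / (q - ε) - 1) + b * (b / (q + ε) - 1) := by
        gcongr
    _ = _ := key
end

section
/- (Binary reverse Pinsker inequality.) For all real numbers a ∈ [0,1] and b ∈ (0,1), the binary Kullback–Leibler divergence satisfies d(a, b) = a·log(a/b) + (1−a)·log((1−a)/(1−b)) ≤ (a−b)² / (b·(1−b)), with the conventions 0·log 0 = 0 and 0·log(0/b) = 0. -/
lemma mul_log_le (x c : ℝ) (hx : 0 ≤ x) (hc : 0 < c) :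
    x * Real.log (x / c) ≤ x * ((x - c) / c) := by
  rcases eq_or_lt_of_le hx with h | h
  · simp [← h]
  · apply mul_le_mul_of_nonneg_left _ hx
    have := Real.log_le_sub_one_of_pos (div_pos h hc)
    calc Real.log (x / c) ≤ x / c - 1 := this
      _ = (x - c) / c := by field_simp

/-- (Binary reverse Pinsker inequality.) For all `a ∈ [0,1]` and `b ∈ (0,1)`,
`d(a, b) = a·log(a/b) + (1−a)·log((1−a)/(1−b)) ≤ (a−b)² / (b·(1−b))`.
(The conventions `0·log 0 = 0` and `0·log(0/b) = 0` are automatic since in Lean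
`Real.log 0 = 0` and multiplication by `0` annihilates.) -/
theorem binary_reverse_pinsker (a b : ℝ) (ha0 : 0 ≤ a) (ha1 : a ≤ 1)
    (hb0 : 0 < b) (hb1 : b < 1) :
    a * Real.log (a / b) + (1 - a) * Real.log ((1 - a) / (1 - b)) ≤
      (a - b) ^ 2 / (b * (1 - b)) := by
  have h1 := mul_log_le a b ha0 hb0
  have h2 := mul_log_le (1 - a) (1 - b) (by linarith) (by linarith)
  have key : a * ((a - b) / b) + (1 - a) * ((1 - a - (1 - b)) / (1 - b))
      = (a - b) ^ 2 / (b * (1 - b)) := by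
    have hb : b ≠ 0 := hb0.ne'
    have hb' : (1 : ℝ) - b ≠ 0 := by linarith
    field_simp
    ring
  linarith [h1, h2]
end

section
/- (Concentration of the empirical standard deviation.) Let t ≥ 2 and let X_1, …, X_t be independent random variables taking values in [0,1], and let δ ∈ (0,1). Then Pr( sqrt(E[V_t(X)]) > sqrt(V_t(X)) + sqrt(2 log(1/δ)/(t−1)) ) ≤ δ, and likewise Pr( sqrt(V_t(X)) > sqrt(E[V_t(X)]) + sqrt(2 log(1/δ)/(t−1)) ) ≤ δ. -/
open MeasureTheory ProbabilityTheory

/-- Empirical (sample) variance of the vector `(X 0, …, X (t-1))`: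
`V_t(X) = (1/(t(t−1))) Σ_{i < j} (X i − X j)²`. -/
noncomputable def sampleVariance {Ω : Type*} {t : ℕ} (X : Fin t → Ω → ℝ) (ω : Ω) : ℝ :=
  (∑ j : Fin t, ∑ i ∈ Finset.univ.filter (fun i : Fin t => i < j), (X i ω - X j ω) ^ 2) /
    ((t : ℝ) * ((t : ℝ) - 1))

set_option maxHeartbeats 2000000

open Finset
open scoped ENNReal

lemma exp_neg_le_quad {x : ℝ} (hx : 0 ≤ x) : Real.exp (-x) ≤ 1 - x + x^2/2 := by
  have h : MonotoneOn (fun z => 1 - z + z^2/2 - Real.exp (-z)) (Set.Ici (0:ℝ)) := by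
    apply monotoneOn_of_deriv_nonneg (convex_Ici 0)
    · fun_prop
    · apply Differentiable.differentiableOn; fun_prop
    · intro z hz
      have hd : deriv (fun z : ℝ => 1 - z + z^2/2 - Real.exp (-z)) z = -1 + z + Real.exp (-z) := by
        have h1 : HasDerivAt (fun z : ℝ => 1 - z + z^2/2 - Real.exp (-z))
            (0 - 1 + 2 * z^1 / 2 - (Real.exp (-z) * (-1))) z := by
          have e1 : HasDerivAt (fun z : ℝ => Real.exp (-z)) (Real.exp (-z) * (-1)) z :=
            (Real.hasDerivAt_exp (-z)).comp z (hasDerivAt_neg z)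
          have e2 : HasDerivAt (fun z : ℝ => 1 - z) (0 - 1) z :=
            (hasDerivAt_const z (1:ℝ)).sub (hasDerivAt_id z)
          have e3 : HasDerivAt (fun z : ℝ => z^2/2) (2 * z^1 / 2) z := by
            simpa using ((hasDerivAt_pow 2 z).div_const 2)
          exact (e2.add e3).sub e1
        rw [h1.deriv]; ring
      rw [hd]
      have := Real.add_one_le_exp (-z)
      linarith
  have h0 := h (Set.self_mem_Ici) hx hx
  simp only [Real.exp_zero] at h0
  norm_num at h0
  linarith

lemma exp_chord {θ y : ℝ} (h0 : 0 ≤ y) (h1 : y ≤ 1) :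
    Real.exp (θ * y) ≤ 1 + (Real.exp θ - 1) * y := by
  have := convexOn_exp.2 (Set.mem_univ (0:ℝ)) (Set.mem_univ θ) (by linarith : 0 ≤ 1 - y) h0 (by ring)
  simp only [smul_eq_mul, mul_zero, zero_add, Real.exp_zero, mul_one] at this
  calc Real.exp (θ * y) = Real.exp ((1-y) * 0 + y * θ) := by ring_nf
    _ ≤ (1-y) * 1 + y * Real.exp θ := by simpa using this
    _ = 1 + (Real.exp θ - 1) * y := by ring

lemma log_one_add_ge {r : ℝ} (hr : 0 < r) : r / (1 + r) ≤ Real.log (1 + r) := by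
  have h1 : (0:ℝ) < 1 + r := by linarith
  have h2 : Real.log ((1+r)⁻¹) ≤ (1+r)⁻¹ - 1 := Real.log_le_sub_one_of_pos (by positivity)
  rw [Real.log_inv] at h2
  have : 1 - (1+r)⁻¹ = r / (1+r) := by field_simp; ring
  linarith [h2, this]
open Finset

lemma exists_perm_pair {t : ℕ} {a b i j : Fin t} (hab : a ≠ b) (hij : i ≠ j) :
    ∃ σ : Equiv.Perm (Fin t), σ a = i ∧ σ b = j := by
  classical
  set σ₁ := Equiv.swap a i with hσ₁
  set j₁ := σ₁ b with hj₁
  have hia : σ₁ a = i := Equiv.swap_apply_left a i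
  have hj₁i : j₁ ≠ i := by
    rw [hj₁, ← hia]
    exact fun h => hab (σ₁.injective h).symm
  refine ⟨σ₁.trans (Equiv.swap j₁ j), ?_, ?_⟩
  · simp only [Equiv.trans_apply, hia]
    exact Equiv.swap_apply_of_ne_of_ne (Ne.symm hj₁i) hij
  · simp only [Equiv.trans_apply, ← hj₁]
    exact Equiv.swap_apply_left j₁ j

lemma card_perm_pair_const {t : ℕ} {a b i j : Fin t} (hab : a ≠ b) (hij : i ≠ j) :
    ((univ : Finset (Equiv.Perm (Fin t))).filter (fun π => (π a, π b) = (i, j))).card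
      = ((univ : Finset (Equiv.Perm (Fin t))).filter (fun π => (π a, π b) = (a, b))).card := by
  classical
  obtain ⟨σ, hσa, hσb⟩ := exists_perm_pair hab hij
  symm
  apply Finset.card_nbij' (fun π => σ * π) (fun π => σ⁻¹ * π)
  · intro π hπ
    simp only [Finset.mem_coe, mem_filter, mem_univ, true_and, Prod.mk.injEq] at hπ ⊢
    simp [Equiv.Perm.mul_apply, hπ.1, hπ.2, hσa, hσb]
  · intro π hπ
    simp only [Finset.mem_coe, mem_filter, mem_univ, true_and, Prod.mk.injEq] at hπ ⊢
    constructor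
    · have := hπ.1; simp [Equiv.Perm.mul_apply, ← hσa] at this ⊢
      exact σ.injective (by simp [this, hσa])
    · have := hπ.2; simp [Equiv.Perm.mul_apply] at this ⊢
      exact σ.injective (by simp [this, hσb])
  · intro π _; simp [mul_assoc]
  · intro π _; simp [mul_assoc]

lemma perm_sum_pair {t : ℕ} (d : Fin t → Fin t → ℝ) {a b : Fin t} (hab : a ≠ b) :
    ∑ π : Equiv.Perm (Fin t), d (π a) (π b)
      = ((univ : Finset (Equiv.Perm (Fin t))).filter (fun π => (π a, π b) = (a, b))).card •
          ∑ p ∈ (univ : Finset (Fin t)).offDiag, d p.1 p.2 := by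
  classical
  have hmem : ∀ π : Equiv.Perm (Fin t), (π a, π b) ∈ (univ : Finset (Fin t)).offDiag := by
    intro π
    simp only [Finset.mem_offDiag, mem_univ, true_and]
    exact fun h => hab (π.injective h)
  have step1 : ∀ π : Equiv.Perm (Fin t), d (π a) (π b)
      = ∑ p ∈ (univ : Finset (Fin t)).offDiag, if (π a, π b) = p then d p.1 p.2 else 0 := by
    intro π
    rw [Finset.sum_ite_eq, if_pos (hmem π)]
  calc ∑ π : Equiv.Perm (Fin t), d (π a) (π b)
      = ∑ π : Equiv.Perm (Fin t), ∑ p ∈ (univ : Finset (Fin t)).offDiag,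
          if (π a, π b) = p then d p.1 p.2 else 0 := Finset.sum_congr rfl (fun π _ => step1 π)
    _ = ∑ p ∈ (univ : Finset (Fin t)).offDiag, ∑ π : Equiv.Perm (Fin t),
          if (π a, π b) = p then d p.1 p.2 else 0 := Finset.sum_comm
    _ = ∑ p ∈ (univ : Finset (Fin t)).offDiag,
          ((univ : Finset (Equiv.Perm (Fin t))).filter (fun π => (π a, π b) = p)).card •
            d p.1 p.2 := by
        refine Finset.sum_congr rfl fun p hp => ?_
        rw [← Finset.sum_filter, Finset.sum_const]
    _ = ∑ p ∈ (univ : Finset (Fin t)).offDiag,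
          ((univ : Finset (Equiv.Perm (Fin t))).filter (fun π => (π a, π b) = (a, b))).card •
            d p.1 p.2 := by
        refine Finset.sum_congr rfl fun p hp => ?_
        have hp' : p.1 ≠ p.2 := (Finset.mem_offDiag.1 hp).2.2
        rw [show p = (p.1, p.2) from rfl, card_perm_pair_const hab hp']
    _ = _ := by rw [← Finset.smul_sum]

lemma perm_card_total {t : ℕ} {a b : Fin t} (hab : a ≠ b) :
    ((univ : Finset (Equiv.Perm (Fin t))).filter (fun π => (π a, π b) = (a, b))).card
        * (t * (t - 1)) = Fintype.card (Equiv.Perm (Fin t)) := by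
  classical
  have hmem : ∀ π : Equiv.Perm (Fin t), (π a, π b) ∈ (univ : Finset (Fin t)).offDiag := by
    intro π
    simp only [Finset.mem_offDiag, mem_univ, true_and]
    exact fun h => hab (π.injective h)
  have h1 : ∑ p ∈ (univ : Finset (Fin t)).offDiag,
      ((univ : Finset (Equiv.Perm (Fin t))).filter (fun π => (π a, π b) = p)).card
      = Fintype.card (Equiv.Perm (Fin t)) := by
    have : ∀ p, ((univ : Finset (Equiv.Perm (Fin t))).filter (fun π => (π a, π b) = p)).card
        = ∑ π : Equiv.Perm (Fin t), if (π a, π b) = p then 1 else 0 := by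
      intro p; rw [← Finset.sum_filter, Finset.sum_const, smul_eq_mul, mul_one]
    rw [Finset.sum_congr rfl (fun p _ => this p), Finset.sum_comm]
    have : ∀ π : Equiv.Perm (Fin t), (∑ p ∈ (univ : Finset (Fin t)).offDiag,
        if (π a, π b) = p then (1:ℕ) else 0) = 1 := by
      intro π; rw [Finset.sum_ite_eq, if_pos (hmem π)]
    rw [Finset.sum_congr rfl (fun π _ => this π), Finset.sum_const, smul_eq_mul, mul_one,
      Finset.card_univ]
  have hc : ∀ p ∈ (univ : Finset (Fin t)).offDiag,
      ((univ : Finset (Equiv.Perm (Fin t))).filter (fun π => (π a, π b) = p)).card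
      = ((univ : Finset (Equiv.Perm (Fin t))).filter (fun π => (π a, π b) = (a, b))).card := by
    intro p hp
    have hp' : p.1 ≠ p.2 := (Finset.mem_offDiag.1 hp).2.2
    rw [show p = (p.1, p.2) from rfl, card_perm_pair_const hab hp']
  have h2 : ∑ p ∈ (univ : Finset (Fin t)).offDiag,
      ((univ : Finset (Equiv.Perm (Fin t))).filter (fun π => (π a, π b) = p)).card
      = ((univ : Finset (Fin t)).offDiag).card *
        ((univ : Finset (Equiv.Perm (Fin t))).filter (fun π => (π a, π b) = (a, b))).card := by
    rw [Finset.sum_congr rfl hc, Finset.sum_const, smul_eq_mul]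
  have h3 : ((univ : Finset (Fin t)).offDiag).card = t * (t - 1) := by
    rw [Finset.offDiag_card]
    simp only [Finset.card_univ, Fintype.card_fin]
    rw [← Nat.pred_eq_sub_one, Nat.mul_pred]
  rw [← h1, h2, h3, mul_comm]

lemma sum_offDiag_eq_two_mul {t : ℕ} (d : Fin t → Fin t → ℝ)
    (hsymm : ∀ i j, d i j = d j i) :
    ∑ p ∈ (univ : Finset (Fin t)).offDiag, d p.1 p.2
      = 2 * ∑ j : Fin t, ∑ i ∈ univ.filter (fun i => i < j), d i j := by
  classical
  have hsplit := Finset.sum_filter_add_sum_filter_not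
    ((univ : Finset (Fin t)).offDiag) (fun p => p.1 < p.2) (fun p => d p.1 p.2)
  have he : (univ : Finset (Fin t)).offDiag.filter (fun p => ¬ p.1 < p.2)
      = ((univ : Finset (Fin t)).offDiag.filter (fun p => p.1 < p.2)).image Prod.swap := by
    ext p
    simp only [Finset.mem_filter, Finset.mem_offDiag, Finset.mem_image, mem_univ, true_and]
    constructor
    · rintro ⟨hne, hnlt⟩
      exact ⟨(p.2, p.1), ⟨⟨Ne.symm hne, lt_of_le_of_ne (not_lt.1 hnlt) (Ne.symm hne)⟩, rfl⟩⟩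
    · rintro ⟨q, ⟨hne, hlt⟩, rfl⟩
      exact ⟨Ne.symm hne, not_lt.2 (le_of_lt hlt)⟩
  have hsum2 : ∑ p ∈ (univ : Finset (Fin t)).offDiag.filter (fun p => ¬ p.1 < p.2), d p.1 p.2
      = ∑ p ∈ (univ : Finset (Fin t)).offDiag.filter (fun p => p.1 < p.2), d p.1 p.2 := by
    rw [he, Finset.sum_image (by intro x _ y _ h; exact Prod.swap_injective h)]
    exact Finset.sum_congr rfl fun p _ => by simp [hsymm p.2 p.1]
  have hgrp : ∑ p ∈ (univ : Finset (Fin t)).offDiag.filter (fun p => p.1 < p.2), d p.1 p.2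
      = ∑ j : Fin t, ∑ i ∈ univ.filter (fun i => i < j), d i j := by
    have hset : (univ : Finset (Fin t)).offDiag.filter (fun p => p.1 < p.2)
        = ((univ : Finset (Fin t)) ×ˢ (univ : Finset (Fin t))).filter (fun p => p.1 < p.2) := by
      ext p
      simp only [Finset.mem_filter, Finset.mem_offDiag, Finset.mem_product, mem_univ, true_and]
      exact ⟨fun h => h.2, fun h => ⟨ne_of_lt h, h⟩⟩
    set F : Fin t → Fin t → ℝ := fun i j => if i < j then d i j else 0 with hF
    have : ∑ p ∈ ((univ : Finset (Fin t)) ×ˢ (univ : Finset (Fin t))).filter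
        (fun p => p.1 < p.2), d p.1 p.2 = ∑ p ∈ (univ : Finset (Fin t)) ×ˢ univ, F p.1 p.2 := by
      rw [Finset.sum_filter]
    rw [hset, this, Finset.sum_product' (f := F), Finset.sum_comm]
    refine Finset.sum_congr rfl fun j _ => ?_
    rw [← Finset.sum_filter]
  linarith [hsplit, hsum2, hgrp]
open MeasureTheory ProbabilityTheory Finset
open scoped ENNReal

lemma perm_matching_identity {t q : ℕ} (ht : 2 ≤ t)
    (A B : Fin q → Fin t) (hAB : ∀ k, A k ≠ B k)
    (d : Fin t → Fin t → ℝ) (hsymm : ∀ i j, d i j = d j i) :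
    ∑ π : Equiv.Perm (Fin t), ∑ k : Fin q, d (π (A k)) (π (B k))
      = (2 * q * (Fintype.card (Equiv.Perm (Fin t)) : ℝ)) / ((t : ℝ) * ((t : ℝ) - 1))
          * ∑ j : Fin t, ∑ i ∈ univ.filter (fun i => i < j), d i j := by
  classical
  have htR : (0:ℝ) < (t : ℝ) * ((t : ℝ) - 1) := by
    have : (2:ℝ) ≤ (t:ℝ) := by exact_mod_cast ht
    nlinarith
  have hcast : ∀ k : Fin q,
      ((((univ : Finset (Equiv.Perm (Fin t))).filter
        (fun π => (π (A k), π (B k)) = (A k, B k))).card : ℝ))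
        = (Fintype.card (Equiv.Perm (Fin t)) : ℝ) / ((t : ℝ) * ((t : ℝ) - 1)) := by
    intro k
    have h := perm_card_total (hAB k)
    have hcast2 : ((t * (t-1) : ℕ) : ℝ) = (t : ℝ) * ((t : ℝ) - 1) := by
      push_cast [Nat.cast_sub (by omega : 1 ≤ t)]
      ring
    rw [eq_div_iff (ne_of_gt htR), ← hcast2, ← Nat.cast_mul]
    exact_mod_cast congrArg (Nat.cast (R := ℝ)) h
  rw [Finset.sum_comm]
  have hstep : ∀ k : Fin q, ∑ π : Equiv.Perm (Fin t), d (π (A k)) (π (B k))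
      = ((Fintype.card (Equiv.Perm (Fin t)) : ℝ) / ((t : ℝ) * ((t : ℝ) - 1)))
        * (2 * ∑ j : Fin t, ∑ i ∈ univ.filter (fun i => i < j), d i j) := by
    intro k
    rw [perm_sum_pair d (hAB k), sum_offDiag_eq_two_mul d hsymm, nsmul_eq_mul, hcast k]
  rw [Finset.sum_congr rfl (fun k _ => hstep k), Finset.sum_const, Finset.card_univ,
    Fintype.card_fin, nsmul_eq_mul]
  field_simp
open MeasureTheory ProbabilityTheory Finset
open scoped ENNReal

lemma lintegral_prod_pairs {Ω : Type*} [MeasurableSpace Ω] {μ : Measure Ω}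
    [IsProbabilityMeasure μ] {t q : ℕ} (X : Fin t → Ω → ℝ) (hmeas : ∀ i, Measurable (X i))
    (hindep : iIndepFun X μ)
    (aa bb : Fin q → Fin t) (ha : Function.Injective aa) (hb : Function.Injective bb)
    (hab : ∀ k l, aa k ≠ bb l) (θ : ℝ) (s : Finset (Fin q)) :
    ∫⁻ ω, ∏ k ∈ s, ENNReal.ofReal (Real.exp (θ * (X (aa k) ω - X (bb k) ω)^2)) ∂μ
      = ∏ k ∈ s, ∫⁻ ω, ENNReal.ofReal (Real.exp (θ * (X (aa k) ω - X (bb k) ω)^2)) ∂μ := by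
  classical
  induction s using Finset.induction_on with
  | empty => simp
  | @insert k0 s' hk0 ih =>
    simp only [Finset.prod_insert hk0]
    set F : Fin q → Ω → ℝ≥0∞ :=
      fun k ω => ENNReal.ofReal (Real.exp (θ * (X (aa k) ω - X (bb k) ω)^2)) with hF
    have hFmeas : ∀ k, Measurable (F k) := by
      intro k
      apply Measurable.ennreal_ofReal
      exact (((hmeas (aa k)).sub (hmeas (bb k))).pow_const 2).const_mul θ |>.exp
    set S : Finset (Fin t) := {aa k0, bb k0} with hS
    set T : Finset (Fin t) := s'.biUnion (fun k => {aa k, bb k}) with hT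
    have hST : Disjoint S T := by
      rw [Finset.disjoint_left]
      intro x hxS hxT
      simp only [hS, hT, Finset.mem_insert, Finset.mem_singleton, Finset.mem_biUnion] at hxS hxT
      obtain ⟨k, hk, hxk⟩ := hxT
      rcases hxS with h1 | h1 <;> rcases hxk with h2 | h2
      · exact hk0 (ha (h1 ▸ h2.symm) ▸ hk)
      · exact hab k0 k (h1 ▸ h2.symm ▸ rfl)
      · exact hab k k0 (h2.symm.trans h1)
      · exact hk0 (hb (h1 ▸ h2.symm) ▸ hk)
    have base := hindep.indepFun_finset S T hST hmeas
    have hmemS1 : aa k0 ∈ S := by simp [hS]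
    have hmemS2 : bb k0 ∈ S := by simp [hS]
    have hmemT1 : ∀ k ∈ s', aa k ∈ T := fun k hk => by
      simp only [hT, Finset.mem_biUnion]; exact ⟨k, hk, by simp⟩
    have hmemT2 : ∀ k ∈ s', bb k ∈ T := fun k hk => by
      simp only [hT, Finset.mem_biUnion]; exact ⟨k, hk, by simp⟩
    set φ : ((i : S) → ℝ) → ℝ≥0∞ := fun v =>
      ENNReal.ofReal (Real.exp (θ * (v ⟨aa k0, hmemS1⟩ - v ⟨bb k0, hmemS2⟩)^2)) with hφ
    set ψ : ((i : T) → ℝ) → ℝ≥0∞ := fun v =>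
      ∏ k ∈ s'.attach, ENNReal.ofReal (Real.exp (θ *
        (v ⟨aa k.1, hmemT1 k.1 k.2⟩ - v ⟨bb k.1, hmemT2 k.1 k.2⟩)^2)) with hψ
    have hφm : Measurable φ := by
      apply Measurable.ennreal_ofReal
      apply Real.measurable_exp.comp
      apply Measurable.const_mul
      exact ((measurable_pi_apply (⟨aa k0, hmemS1⟩ : {x // x ∈ S})).sub
        (measurable_pi_apply (⟨bb k0, hmemS2⟩ : {x // x ∈ S}))).pow_const 2
    have hψm : Measurable ψ := by
      apply Finset.measurable_prod
      intro k _
      apply Measurable.ennreal_ofReal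
      apply Real.measurable_exp.comp
      apply Measurable.const_mul
      exact ((measurable_pi_apply (⟨aa k.1, hmemT1 k.1 k.2⟩ : {x // x ∈ T})).sub
        (measurable_pi_apply (⟨bb k.1, hmemT2 k.1 k.2⟩ : {x // x ∈ T}))).pow_const 2
    have hind2 : IndepFun (F k0) (fun ω => ∏ k ∈ s', F k ω) μ := by
      have h1 : F k0 = φ ∘ (fun ω (i : S) => X i ω) := rfl
      have h2 : (fun ω => ∏ k ∈ s', F k ω) = ψ ∘ (fun ω (i : T) => X i ω) := by
        funext ω
        simp only [Function.comp_apply, hψ]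
        exact (Finset.prod_attach s' (fun k => F k ω)).symm
      rw [h1, h2]
      exact base.comp hφm hψm
    have hprodmeas : Measurable (fun ω => ∏ k ∈ s', F k ω) :=
      Finset.measurable_prod _ (fun k _ => hFmeas k)
    calc ∫⁻ ω, F k0 ω * ∏ k ∈ s', F k ω ∂μ
        = ∫⁻ ω, (F k0 * fun ω => ∏ k ∈ s', F k ω) ω ∂μ := by rfl
      _ = (∫⁻ ω, F k0 ω ∂μ) * ∫⁻ ω, ∏ k ∈ s', F k ω ∂μ :=
          lintegral_mul_eq_lintegral_mul_lintegral_of_indepFun (hFmeas k0) hprodmeas hind2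
      _ = (∫⁻ ω, F k0 ω ∂μ) * ∏ k ∈ s', ∫⁻ ω, F k ω ∂μ := by rw [ih]
open MeasureTheory ProbabilityTheory Finset
open scoped ENNReal

lemma bounded_integrable {Ω : Type*} [MeasurableSpace Ω] {μ : Measure Ω}
    [IsProbabilityMeasure μ] {Y : Ω → ℝ} (hY : Measurable Y)
    (h0 : ∀ ω, 0 ≤ Y ω) (h1 : ∀ ω, Y ω ≤ 1) : Integrable Y μ :=
  Integrable.mono' (integrable_const 1) hY.aestronglyMeasurable
    (Filter.Eventually.of_forall fun ω => by
      rw [Real.norm_eq_abs, abs_of_nonneg (h0 ω)]; exact h1 ω)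

lemma prod_ofReal_exp {ι : Type*} (s : Finset ι) (g : ι → ℝ) :
    ∏ i ∈ s, ENNReal.ofReal (Real.exp (g i)) = ENNReal.ofReal (Real.exp (∑ i ∈ s, g i)) := by
  rw [Real.exp_sum, ENNReal.ofReal_prod_of_nonneg (fun i _ => (Real.exp_pos (g i)).le)]

lemma ofReal_exp_rpow (x c : ℝ) :
    ENNReal.ofReal (Real.exp x) ^ c = ENNReal.ofReal (Real.exp (c * x)) := by
  rw [ENNReal.ofReal_rpow_of_pos (Real.exp_pos x), ← Real.exp_mul, mul_comm]

lemma lintegral_ofReal_exp_le {Ω : Type*} [MeasurableSpace Ω] {μ : Measure Ω}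
    [IsProbabilityMeasure μ] {Y : Ω → ℝ} (hY : Measurable Y)
    (h0 : ∀ ω, 0 ≤ Y ω) (h1 : ∀ ω, Y ω ≤ 1) {θ γ : ℝ}
    (hpt : ∀ y : ℝ, 0 ≤ y → y ≤ 1 → Real.exp (θ * y) ≤ 1 + γ * y) :
    ∫⁻ ω, ENNReal.ofReal (Real.exp (θ * Y ω)) ∂μ
      ≤ ENNReal.ofReal (Real.exp (γ * ∫ ω, Y ω ∂μ)) := by
  have hint : Integrable Y μ := bounded_integrable hY h0 h1
  have hint2 : Integrable (fun ω => 1 + γ * Y ω) μ :=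
    (integrable_const 1).add (hint.const_mul γ)
  have hnn : 0 ≤ᵐ[μ] fun ω => 1 + γ * Y ω :=
    Filter.Eventually.of_forall fun ω =>
      le_trans (Real.exp_pos (θ * Y ω)).le (hpt (Y ω) (h0 ω) (h1 ω))
  calc ∫⁻ ω, ENNReal.ofReal (Real.exp (θ * Y ω)) ∂μ
      ≤ ∫⁻ ω, ENNReal.ofReal (1 + γ * Y ω) ∂μ :=
        lintegral_mono fun ω => ENNReal.ofReal_le_ofReal (hpt (Y ω) (h0 ω) (h1 ω))
    _ = ENNReal.ofReal (∫ ω, (1 + γ * Y ω) ∂μ) :=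
        (ofReal_integral_eq_lintegral_ofReal hint2 hnn).symm
    _ = ENNReal.ofReal (1 + γ * ∫ ω, Y ω ∂μ) := by
        rw [integral_add (integrable_const 1) (hint.const_mul γ), integral_const,
          MeasureTheory.integral_const_mul]
        simp
    _ ≤ ENNReal.ofReal (Real.exp (γ * ∫ ω, Y ω ∂μ)) :=
        ENNReal.ofReal_le_ofReal (by
          have := Real.add_one_le_exp (γ * ∫ ω, Y ω ∂μ); linarith)
lemma master_mgf {Ω : Type*} [MeasurableSpace Ω] (μ : Measure Ω) [IsProbabilityMeasure μ]
    (t : ℕ) (ht : 2 ≤ t) (X : Fin t → Ω → ℝ) (hmeas : ∀ i, Measurable (X i))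
    (hrange : ∀ i ω, X i ω ∈ Set.Icc (0:ℝ) 1)
    (hindep : iIndepFun X μ)
    {θ γ : ℝ} (hpt : ∀ y : ℝ, 0 ≤ y → y ≤ 1 → Real.exp (θ * y) ≤ 1 + γ * y) :
    ∫⁻ ω, ENNReal.ofReal (Real.exp ((2 * (t / 2 : ℕ) : ℝ) * θ * sampleVariance X ω)) ∂μ
      ≤ ENNReal.ofReal
          (Real.exp ((2 * (t / 2 : ℕ) : ℝ) * γ * ∫ ω, sampleVariance X ω ∂μ)) := by
  classical
  set q : ℕ := t / 2 with hqdef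
  have hq2 : 2 * q ≤ t := by omega
  set A : Fin q → Fin t := fun k => ⟨2 * k.1, by have := k.2; omega⟩ with hAdef
  set B : Fin q → Fin t := fun k => ⟨2 * k.1 + 1, by have := k.2; omega⟩ with hBdef
  have hAB : ∀ k, A k ≠ B k := by
    intro k h
    have := congrArg Fin.val h
    simp [hAdef, hBdef] at this
  have hAinj : Function.Injective A := by
    intro k l h
    have := congrArg Fin.val h
    simp [hAdef] at this
    exact Fin.ext (by omega)
  have hBinj : Function.Injective B := by
    intro k l h
    have := congrArg Fin.val h
    simp [hBdef] at this
    exact Fin.ext (by omega)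
  have hABall : ∀ k l, A k ≠ B l := by
    intro k l h
    have := congrArg Fin.val h
    simp [hAdef, hBdef] at this
    omega
  set d : Ω → Fin t → Fin t → ℝ := fun ω i j => (X i ω - X j ω)^2 with hddef
  have hd0 : ∀ ω i j, 0 ≤ d ω i j := fun ω i j => sq_nonneg _
  have hd1 : ∀ ω i j, d ω i j ≤ 1 := by
    intro ω i j
    obtain ⟨hi0, hi1⟩ := hrange i ω
    obtain ⟨hj0, hj1⟩ := hrange j ω
    simp only [hddef]
    nlinarith
  have hdmeas : ∀ i j, Measurable (fun ω => d ω i j) := fun i j =>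
    ((hmeas i).sub (hmeas j)).pow_const 2
  set V : Ω → ℝ := sampleVariance X with hVdef
  have hVmeas : Measurable V := by
    apply Measurable.div_const
    exact Finset.measurable_sum _ fun j _ =>
      Finset.measurable_sum _ fun i _ => ((hmeas i).sub (hmeas j)).pow_const 2
  set m : ℝ := ∫ ω, V ω ∂μ with hmdef
  set P : ℕ := Fintype.card (Equiv.Perm (Fin t)) with hPdef
  have hP0 : (0:ℝ) < (P : ℝ) := by exact_mod_cast Fintype.card_pos
  set c : ℝ := (P : ℝ)⁻¹ with hcdef
  have hc0 : 0 ≤ c := inv_nonneg.2 hP0.le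
  have htR : (0:ℝ) < (t : ℝ) * ((t : ℝ) - 1) := by
    have : (2:ℝ) ≤ (t:ℝ) := by exact_mod_cast ht
    nlinarith
  set S : Equiv.Perm (Fin t) → Ω → ℝ := fun π ω => ∑ k : Fin q, d ω (π (A k)) (π (B k))
    with hSdef
  have hSmeas : ∀ π, Measurable (S π) := fun π =>
    Finset.measurable_sum _ fun k _ => hdmeas _ _
  -- pointwise combinatorial identity
  have hsum : ∀ ω, ∑ π : Equiv.Perm (Fin t), S π ω = (2 * q : ℝ) * (P : ℝ) * V ω := by
    intro ω
    have := perm_matching_identity ht A B hAB (d ω) (fun i j => by simp [hddef]; ring)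
    rw [hSdef]
    simp only []
    rw [this]
    have hV : V ω = (∑ j : Fin t, ∑ i ∈ Finset.univ.filter (fun i => i < j), d ω i j)
        / ((t : ℝ) * ((t : ℝ) - 1)) := rfl
    rw [hV]
    field_simp
    try ring
  -- the per-π functions
  set f : Equiv.Perm (Fin t) → Ω → ℝ≥0∞ :=
    fun π ω => ENNReal.ofReal (Real.exp (θ * S π ω)) with hfdef
  have hfmeas : ∀ π, Measurable (f π) := fun π =>
    Measurable.ennreal_ofReal (((hSmeas π).const_mul θ).exp)
  -- pointwise: ofReal (exp (nθ V)) = ∏ f_π ^ c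
  have hptwise : ∀ ω, ENNReal.ofReal (Real.exp ((2 * q : ℝ) * θ * V ω))
      = ∏ π : Equiv.Perm (Fin t), f π ω ^ c := by
    intro ω
    have h1 : ∀ π : Equiv.Perm (Fin t), f π ω ^ c
        = ENNReal.ofReal (Real.exp (c * (θ * S π ω))) := fun π => ofReal_exp_rpow _ _
    rw [Finset.prod_congr rfl (fun π _ => h1 π), prod_ofReal_exp]
    congr 1
    rw [← Finset.mul_sum, ← Finset.mul_sum, hsum ω, hcdef]
    field_simp [ne_of_gt hP0]
    try ring
  -- Hölder
  have hsum_c : ∑ _π : Equiv.Perm (Fin t), c = 1 := by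
    rw [Finset.sum_const, Finset.card_univ, nsmul_eq_mul, hcdef, ← hPdef,
      mul_inv_cancel₀ (ne_of_gt hP0)]
  have hhold : ∫⁻ ω, ∏ π : Equiv.Perm (Fin t), f π ω ^ c ∂μ
      ≤ ∏ π : Equiv.Perm (Fin t), (∫⁻ ω, f π ω ∂μ) ^ c :=
    ENNReal.lintegral_prod_norm_pow_le _ (fun π _ => (hfmeas π).aemeasurable) hsum_c
      (fun _ _ => hc0)
  -- per-π bound
  set M : Equiv.Perm (Fin t) → ℝ := fun π => ∫ ω, S π ω ∂μ with hMdef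
  have hSint : ∀ π, Integrable (S π) μ := fun π =>
    MeasureTheory.integrable_finset_sum _ fun k _ =>
      bounded_integrable (hdmeas _ _) (fun ω => hd0 ω _ _) (fun ω => hd1 ω _ _)
  have hperπ : ∀ π : Equiv.Perm (Fin t),
      ∫⁻ ω, f π ω ∂μ ≤ ENNReal.ofReal (Real.exp (γ * M π)) := by
    intro π
    have hfact : ∫⁻ ω, f π ω ∂μ
        = ∏ k : Fin q, ∫⁻ ω, ENNReal.ofReal
            (Real.exp (θ * (X (π (A k)) ω - X (π (B k)) ω)^2)) ∂μ := by
      have hpt2 : ∀ ω, f π ω = ∏ k : Fin q, ENNReal.ofReal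
          (Real.exp (θ * (X (π (A k)) ω - X (π (B k)) ω)^2)) := by
        intro ω
        rw [prod_ofReal_exp, ← Finset.mul_sum]
        try rfl
      rw [lintegral_congr hpt2]
      exact lintegral_prod_pairs X hmeas hindep (π ∘ A) (π ∘ B)
        (π.injective.comp hAinj) (π.injective.comp hBinj)
        (fun k l h => hABall k l (π.injective h)) θ Finset.univ
    rw [hfact]
    have hM : γ * M π = ∑ k : Fin q, γ * ∫ ω, d ω (π (A k)) (π (B k)) ∂μ := by
      rw [hMdef]
      simp only []
      rw [MeasureTheory.integral_finset_sum _ (fun k _ =>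
        bounded_integrable (hdmeas _ _) (fun ω => hd0 ω _ _) (fun ω => hd1 ω _ _)),
        Finset.mul_sum]
    rw [hM, ← prod_ofReal_exp]
    apply Finset.prod_le_prod'
    intro k _
    exact lintegral_ofReal_exp_le (hdmeas _ _) (fun ω => hd0 ω _ _) (fun ω => hd1 ω _ _) hpt
  -- combine
  have hfinal : ∏ π : Equiv.Perm (Fin t), (∫⁻ ω, f π ω ∂μ) ^ c
      ≤ ENNReal.ofReal (Real.exp ((2 * q : ℝ) * γ * m)) := by
    calc ∏ π : Equiv.Perm (Fin t), (∫⁻ ω, f π ω ∂μ) ^ c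
        ≤ ∏ π : Equiv.Perm (Fin t), (ENNReal.ofReal (Real.exp (γ * M π))) ^ c :=
          Finset.prod_le_prod' fun π _ => ENNReal.rpow_le_rpow (hperπ π) hc0
      _ = ENNReal.ofReal (Real.exp (∑ π : Equiv.Perm (Fin t), c * (γ * M π))) := by
          rw [Finset.prod_congr rfl (fun π _ => ofReal_exp_rpow (γ * M π) c),
            prod_ofReal_exp]
      _ = ENNReal.ofReal (Real.exp ((2 * q : ℝ) * γ * m)) := by
          congr 1
          have hMsum : ∑ π : Equiv.Perm (Fin t), M π = (2 * q : ℝ) * (P : ℝ) * m := by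
            rw [hMdef]
            simp only []
            rw [← MeasureTheory.integral_finset_sum _ (fun π _ => hSint π)]
            have : ∀ ω, ∑ π : Equiv.Perm (Fin t), S π ω = (2 * q : ℝ) * (P : ℝ) * V ω :=
              hsum
            rw [MeasureTheory.integral_congr_ae (Filter.Eventually.of_forall this),
              MeasureTheory.integral_const_mul, hmdef]
          rw [← Finset.mul_sum, ← Finset.mul_sum, hMsum, hcdef]
          field_simp [ne_of_gt hP0]
          try ring
  calc ∫⁻ ω, ENNReal.ofReal (Real.exp ((2 * (t / 2 : ℕ) : ℝ) * θ * sampleVariance X ω)) ∂μ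
      = ∫⁻ ω, ∏ π : Equiv.Perm (Fin t), f π ω ^ c ∂μ := lintegral_congr fun ω => hptwise ω
    _ ≤ ∏ π : Equiv.Perm (Fin t), (∫⁻ ω, f π ω ∂μ) ^ c := hhold
    _ ≤ ENNReal.ofReal (Real.exp ((2 * (t / 2 : ℕ) : ℝ) * γ * ∫ ω, sampleVariance X ω ∂μ)) :=
        hfinal
/-- (Concentration of the empirical standard deviation.) Let `t ≥ 2` and `X 0, …, X (t-1)` be
independent random variables with values in `[0,1]`, and `δ ∈ (0,1)`. Then
`Pr( sqrt(E[Vₜ(X)]) > sqrt(Vₜ(X)) + sqrt(2 log(1/δ)/(t−1)) ) ≤ δ`, and likewise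
`Pr( sqrt(Vₜ(X)) > sqrt(E[Vₜ(X)]) + sqrt(2 log(1/δ)/(t−1)) ) ≤ δ`. -/
theorem empirical_std_concentration {Ω : Type*} [MeasurableSpace Ω] (μ : Measure Ω)
    [IsProbabilityMeasure μ] (t : ℕ) (ht : 2 ≤ t)
    (X : Fin t → Ω → ℝ) (hmeas : ∀ i, Measurable (X i))
    (hrange : ∀ i ω, X i ω ∈ Set.Icc (0 : ℝ) 1)
    (hindep : iIndepFun X μ)
    (δ : ℝ) (hδ0 : 0 < δ) (hδ1 : δ < 1) :
    μ {ω | Real.sqrt (∫ x, sampleVariance X x ∂μ) >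
        Real.sqrt (sampleVariance X ω) + Real.sqrt (2 * Real.log (1 / δ) / ((t : ℝ) - 1))} ≤
      ENNReal.ofReal δ ∧
    μ {ω | Real.sqrt (sampleVariance X ω) >
        Real.sqrt (∫ x, sampleVariance X x ∂μ) + Real.sqrt (2 * Real.log (1 / δ) / ((t : ℝ) - 1))} ≤
      ENNReal.ofReal δ := by
  classical
  have ht1R : (0:ℝ) < (t:ℝ) - 1 := by
    have : (2:ℝ) ≤ (t:ℝ) := by exact_mod_cast ht
    linarith
  have htR : (0:ℝ) < (t : ℝ) * ((t : ℝ) - 1) := by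
    have : (2:ℝ) ≤ (t:ℝ) := by exact_mod_cast ht
    nlinarith
  set V : Ω → ℝ := sampleVariance X with hVdef
  have hVmeas : Measurable V := by
    apply Measurable.div_const
    exact Finset.measurable_sum _ fun j _ =>
      Finset.measurable_sum _ fun i _ => ((hmeas i).sub (hmeas j)).pow_const 2
  have hVnonneg : ∀ ω, 0 ≤ V ω := by
    intro ω
    apply div_nonneg _ htR.le
    exact Finset.sum_nonneg fun j _ => Finset.sum_nonneg fun i _ => sq_nonneg _
  have hd1' : ∀ ω (i j : Fin t), (X i ω - X j ω)^2 ≤ 1 := by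
    intro ω i j
    obtain ⟨hi0, hi1⟩ := hrange i ω
    obtain ⟨hj0, hj1⟩ := hrange j ω
    nlinarith
  have hVbdd : ∀ ω, V ω ≤ (t:ℝ)*(t:ℝ) / ((t : ℝ) * ((t : ℝ) - 1)) := by
    intro ω
    have hnum : (∑ j : Fin t, ∑ i ∈ Finset.univ.filter (fun i : Fin t => i < j),
        (X i ω - X j ω)^2) ≤ (t:ℝ)*(t:ℝ) := by
      have hinner : ∀ j : Fin t, (∑ i ∈ Finset.univ.filter (fun i : Fin t => i < j),
          (X i ω - X j ω)^2) ≤ (t:ℝ) := by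
        intro j
        calc (∑ i ∈ Finset.univ.filter (fun i : Fin t => i < j), (X i ω - X j ω)^2)
            ≤ ∑ i ∈ Finset.univ.filter (fun i : Fin t => i < j), (1:ℝ) :=
              Finset.sum_le_sum fun i _ => hd1' ω i j
          _ = ((Finset.univ.filter (fun i : Fin t => i < j)).card : ℝ) := by simp
          _ ≤ (t:ℝ) := by
              have h1 := Finset.card_filter_le (Finset.univ : Finset (Fin t)) (fun i => i < j)
              have h2 : (Finset.univ : Finset (Fin t)).card = t := by simp
              exact_mod_cast le_trans h1 (le_of_eq h2)
      calc (∑ j : Fin t, ∑ i ∈ Finset.univ.filter (fun i : Fin t => i < j), (X i ω - X j ω)^2)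
          ≤ ∑ _j : Fin t, (t:ℝ) := Finset.sum_le_sum fun j _ => hinner j
        _ = (t:ℝ)*(t:ℝ) := by
            rw [Finset.sum_const, Finset.card_univ, Fintype.card_fin, nsmul_eq_mul]
    have hVeq : V ω = (∑ j : Fin t, ∑ i ∈ Finset.univ.filter (fun i : Fin t => i < j),
        (X i ω - X j ω)^2) / ((t : ℝ) * ((t : ℝ) - 1)) := rfl
    rw [hVeq]
    exact div_le_div_of_nonneg_right hnum htR.le |>.trans_eq rfl
  have hVint : Integrable V μ := by
    refine Integrable.mono' (integrable_const ((t:ℝ)*(t:ℝ) / ((t : ℝ) * ((t : ℝ) - 1)))) hVmeas.aestronglyMeasurable ?_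
    refine Filter.Eventually.of_forall fun ω => ?_
    rw [Real.norm_eq_abs, abs_of_nonneg (hVnonneg ω)]
    exact hVbdd ω
  set m : ℝ := ∫ ω, V ω ∂μ with hmdef
  have hm0 : 0 ≤ m := integral_nonneg fun ω => hVnonneg ω
  set s : ℝ := Real.sqrt (2 * Real.log (1 / δ) / ((t : ℝ) - 1)) with hsdef
  have hlogpos : 0 < Real.log (1 / δ) := by
    apply Real.log_pos
    rw [lt_div_iff₀ hδ0]
    linarith
  have hspos : 0 < s := Real.sqrt_pos.2 (by positivity)
  have hs2 : s ^ 2 = 2 * Real.log (1 / δ) / ((t : ℝ) - 1) :=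
    Real.sq_sqrt (by positivity)
  have hlogδ : -(((t:ℝ) - 1) * s ^ 2) / 2 = Real.log δ := by
    rw [hs2]
    have : Real.log (1/δ) = - Real.log δ := by rw [one_div, Real.log_inv]
    field_simp [this]
    linarith [this]
  set n : ℕ := 2 * (t / 2) with hndef
  have hnt : ((t:ℝ) - 1) ≤ (n : ℝ) := by
    have : t - 1 ≤ n := by omega
    have h2 : ((t - 1 : ℕ) : ℝ) ≤ (n : ℝ) := by exact_mod_cast this
    rw [Nat.cast_sub (by omega)] at h2
    exact_mod_cast h2
  -- final scalar step
  have hconc : ∀ E : ℝ, E ≤ -((n:ℝ) * s^2) / 2 → Real.exp E ≤ δ := by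
    intro E hE
    have h1 : E ≤ Real.log δ := by
      rw [← hlogδ]
      have : ((t:ℝ)-1) * s^2 ≤ (n:ℝ) * s^2 :=
        mul_le_mul_of_nonneg_right hnt (sq_nonneg s)
      linarith
    calc Real.exp E ≤ Real.exp (Real.log δ) := Real.exp_le_exp.2 h1
      _ = δ := Real.exp_log hδ0
  constructor
  · -- lower tail
    by_cases hm : m = 0
    · have hempty : {ω | Real.sqrt (∫ x, V x ∂μ) >
          Real.sqrt (V ω) + s} = ∅ := by
        ext ω
        simp only [Set.mem_setOf_eq, Set.mem_empty_iff_false, iff_false, not_lt]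
        rw [← hmdef, hm, Real.sqrt_zero]
        have := Real.sqrt_nonneg (V ω)
        linarith
      rw [hempty]
      simp
    · have hmpos : 0 < m := lt_of_le_of_ne hm0 (Ne.symm hm)
      have hsm : 0 < Real.sqrt m := Real.sqrt_pos.2 hmpos
      set c : ℝ := s / Real.sqrt m with hcdef
      have hc0 : 0 ≤ c := div_nonneg hspos.le hsm.le
      set γ : ℝ := c^2/2 - c with hγdef
      have hpt : ∀ y : ℝ, 0 ≤ y → y ≤ 1 → Real.exp ((-c) * y) ≤ 1 + γ * y := by
        intro y hy0 hy1
        have h1 : Real.exp (-(c*y)) ≤ 1 - c*y + (c*y)^2/2 := exp_neg_le_quad (by positivity)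
        have h2 : (c*y)^2 ≤ c^2 * y := by
          have : y^2 ≤ y := by nlinarith
          calc (c*y)^2 = c^2 * y^2 := by ring
            _ ≤ c^2 * y := by nlinarith [sq_nonneg c]
        calc Real.exp ((-c) * y) = Real.exp (-(c*y)) := by ring_nf
          _ ≤ 1 - c*y + (c*y)^2/2 := h1
          _ ≤ 1 + γ * y := by rw [hγdef]; nlinarith
      have hmaster := master_mgf μ t ht X hmeas hrange hindep hpt
      have hncast : ((n:ℕ):ℝ) = 2 * ((t/2 : ℕ):ℝ) := by rw [hndef]; push_cast; ring
      rw [← hVdef, ← hncast, ← hmdef] at hmaster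
      set L : ℝ := (n:ℝ) * c with hLdef
      have hL0 : 0 ≤ L := by positivity
      set g : Ω → ℝ≥0∞ := fun ω => ENNReal.ofReal (Real.exp (L * (m - V ω))) with hgdef
      have hgmeas : Measurable g :=
        Measurable.ennreal_ofReal (((measurable_const.sub hVmeas).const_mul L).exp)
      have hsub : {ω | Real.sqrt (∫ x, V x ∂μ) > Real.sqrt (V ω) + s}
          ⊆ {ω | ENNReal.ofReal (Real.exp (L * (s * Real.sqrt m))) ≤ g ω} := by
        intro ω hω
        simp only [Set.mem_setOf_eq] at hω ⊢
        rw [← hmdef] at hω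
        have key : s * Real.sqrt m ≤ m - V ω := by
          have e1 : Real.sqrt m * Real.sqrt m = m := Real.mul_self_sqrt hm0
          have e2 : Real.sqrt (V ω) * Real.sqrt (V ω) = V ω := Real.mul_self_sqrt (hVnonneg ω)
          have h4 := Real.sqrt_nonneg m
          have h5 := Real.sqrt_nonneg (V ω)
          have h1 : s < Real.sqrt m - Real.sqrt (V ω) := by linarith
          have h2 : m - V ω = (Real.sqrt m - Real.sqrt (V ω)) *
              (Real.sqrt m + Real.sqrt (V ω)) := by
            have hr : (Real.sqrt m - Real.sqrt (V ω)) * (Real.sqrt m + Real.sqrt (V ω))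
                = Real.sqrt m * Real.sqrt m - Real.sqrt (V ω) * Real.sqrt (V ω) := by ring
            rw [hr, e1, e2]
          rw [h2]
          calc s * Real.sqrt m
              ≤ (Real.sqrt m - Real.sqrt (V ω)) * Real.sqrt m :=
                mul_le_mul_of_nonneg_right h1.le h4
            _ ≤ (Real.sqrt m - Real.sqrt (V ω)) * (Real.sqrt m + Real.sqrt (V ω)) :=
                mul_le_mul_of_nonneg_left (by linarith) (by linarith)
        apply ENNReal.ofReal_le_ofReal
        apply Real.exp_le_exp.2
        exact mul_le_mul_of_nonneg_left key hL0
      have hmarkov := (measure_mono (μ := μ) hsub).trans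
        (meas_ge_le_lintegral_div hgmeas.aemeasurable
          (ENNReal.ofReal_pos.2 (Real.exp_pos _)).ne' ENNReal.ofReal_ne_top)
      have hgint : ∫⁻ ω, g ω ∂μ ≤ ENNReal.ofReal (Real.exp (L * m + (n:ℝ) * γ * m)) := by
        have hgeq : ∀ ω, g ω = ENNReal.ofReal (Real.exp (L * m)) *
            ENNReal.ofReal (Real.exp ((n:ℝ) * (-c) * V ω)) := by
          intro ω
          rw [hgdef]
          simp only []
          rw [← ENNReal.ofReal_mul (Real.exp_pos _).le, ← Real.exp_add]
          congr 2
          rw [hLdef]; ring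
        calc ∫⁻ ω, g ω ∂μ
            = ENNReal.ofReal (Real.exp (L * m)) *
              ∫⁻ ω, ENNReal.ofReal (Real.exp ((n:ℝ) * (-c) * V ω)) ∂μ := by
              rw [lintegral_congr hgeq, lintegral_const_mul]
              exact Measurable.ennreal_ofReal ((hVmeas.const_mul _).exp)
          _ ≤ ENNReal.ofReal (Real.exp (L * m)) * ENNReal.ofReal (Real.exp ((n:ℝ) * γ * m)) := by
              apply mul_le_mul_right hmaster
          _ = ENNReal.ofReal (Real.exp (L * m + (n:ℝ) * γ * m)) := by
              rw [← ENNReal.ofReal_mul (Real.exp_pos _).le, ← Real.exp_add]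
      have hexp : L * m + (n:ℝ) * γ * m - L * (s * Real.sqrt m) = -((n:ℝ) * s^2) / 2 := by
        have hmss : Real.sqrt m * Real.sqrt m = m := Real.mul_self_sqrt hm0
        have h1 : c * Real.sqrt m = s := by
          rw [hcdef]; field_simp
        have h2 : c^2 * m = s^2 := by
          rw [hcdef, div_pow, Real.sq_sqrt hm0]
          field_simp
        have hrw : L * m + (n:ℝ) * γ * m - L * (s * Real.sqrt m)
            = (n:ℝ) * ((c^2 * m) / 2) - (n:ℝ) * s * (c * Real.sqrt m) := by
          rw [hLdef, hγdef]; ring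
        rw [hrw, h1, h2]; ring
      calc μ {ω | Real.sqrt (∫ x, V x ∂μ) > Real.sqrt (V ω) + s}
          ≤ (∫⁻ ω, g ω ∂μ) / ENNReal.ofReal (Real.exp (L * (s * Real.sqrt m))) := hmarkov
        _ ≤ ENNReal.ofReal (Real.exp (L * m + (n:ℝ) * γ * m)) /
              ENNReal.ofReal (Real.exp (L * (s * Real.sqrt m))) :=
            ENNReal.div_le_div_right hgint _
        _ = ENNReal.ofReal (Real.exp (L * m + (n:ℝ) * γ * m) /
              Real.exp (L * (s * Real.sqrt m))) :=
            (ENNReal.ofReal_div_of_pos (Real.exp_pos _)).symm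
        _ = ENNReal.ofReal (Real.exp (L * m + (n:ℝ) * γ * m - L * (s * Real.sqrt m))) := by
            rw [Real.exp_sub]
        _ ≤ ENNReal.ofReal δ := ENNReal.ofReal_le_ofReal (hconc _ (le_of_eq hexp))
  · -- upper tail
    by_cases hm : m = 0
    · have hae : V =ᵐ[μ] 0 :=
        (integral_eq_zero_iff_of_nonneg (fun ω => hVnonneg ω) hVint).1 (hmdef ▸ hm)
      have hnull : μ {ω | V ω ≠ 0} = 0 := by
        have h := ae_iff.1 hae
        simpa using h
      have hsub : {ω | Real.sqrt (V ω) > Real.sqrt (∫ x, V x ∂μ) + s} ⊆ {ω | V ω ≠ 0} := by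
        intro ω hω
        simp only [Set.mem_setOf_eq] at hω ⊢
        rw [← hmdef, hm, Real.sqrt_zero, zero_add] at hω
        intro hV0
        rw [hV0, Real.sqrt_zero] at hω
        linarith
      exact le_trans (measure_mono hsub) (le_trans hnull.le (zero_le))
    · have hmpos : 0 < m := lt_of_le_of_ne hm0 (Ne.symm hm)
      have hsm : 0 < Real.sqrt m := Real.sqrt_pos.2 hmpos
      set r : ℝ := s / Real.sqrt m with hrdef
      have hr0 : 0 < r := div_pos hspos hsm
      set θ : ℝ := Real.log (1 + r) with hθdef
      have hθ0 : 0 ≤ θ := Real.log_nonneg (by linarith)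
      have hexpθ : Real.exp θ = 1 + r := Real.exp_log (by linarith)
      have hpt : ∀ y : ℝ, 0 ≤ y → y ≤ 1 → Real.exp (θ * y) ≤ 1 + r * y := by
        intro y hy0 hy1
        have := exp_chord (θ := θ) hy0 hy1
        rw [hexpθ] at this
        simpa using this
      have hmaster := master_mgf μ t ht X hmeas hrange hindep hpt
      have hncast : ((n:ℕ):ℝ) = 2 * ((t/2 : ℕ):ℝ) := by rw [hndef]; push_cast; ring
      rw [← hVdef, ← hncast, ← hmdef] at hmaster
      set u : ℝ := 2 * s * Real.sqrt m + s^2 with hudef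
      set g : Ω → ℝ≥0∞ := fun ω => ENNReal.ofReal (Real.exp ((n:ℝ) * θ * V ω)) with hgdef
      have hgmeas : Measurable g :=
        Measurable.ennreal_ofReal ((hVmeas.const_mul _).exp)
      have hsub : {ω | Real.sqrt (V ω) > Real.sqrt (∫ x, V x ∂μ) + s}
          ⊆ {ω | ENNReal.ofReal (Real.exp ((n:ℝ) * θ * (m + u))) ≤ g ω} := by
        intro ω hω
        simp only [Set.mem_setOf_eq] at hω ⊢
        rw [← hmdef] at hω
        have key : m + u ≤ V ω := by
          have h0 : 0 ≤ Real.sqrt m + s := by positivity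
          have h1 : (Real.sqrt m + s)^2 < (Real.sqrt (V ω))^2 :=
            pow_lt_pow_left₀ hω h0 (by norm_num)
          rw [Real.sq_sqrt (hVnonneg ω)] at h1
          have hmss : Real.sqrt m * Real.sqrt m = m := Real.mul_self_sqrt hm0
          have h2 : (Real.sqrt m + s)^2 = m + u := by
            have hr : (Real.sqrt m + s)^2
                = Real.sqrt m * Real.sqrt m + 2 * s * Real.sqrt m + s^2 := by ring
            rw [hr, hmss, hudef]
            ring
          linarith
        apply ENNReal.ofReal_le_ofReal
        apply Real.exp_le_exp.2
        apply mul_le_mul_of_nonneg_left key (by positivity)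
      have hmarkov := (measure_mono (μ := μ) hsub).trans
        (meas_ge_le_lintegral_div hgmeas.aemeasurable
          (ENNReal.ofReal_pos.2 (Real.exp_pos _)).ne' ENNReal.ofReal_ne_top)
      have hexp : (n:ℝ) * r * m - (n:ℝ) * θ * (m + u) ≤ -((n:ℝ) * s^2) / 2 := by
        have hmss : Real.sqrt m * Real.sqrt m = m := Real.mul_self_sqrt hm0
        have hb0 : 0 < Real.sqrt m + s := by positivity
        have h1 : r * m = s * Real.sqrt m := by
          rw [hrdef]; field_simp; linear_combination (-1 : ℝ) * hmss
        have h2 : m + u = (Real.sqrt m + s)^2 := by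
          rw [hudef]; linear_combination (-1 : ℝ) * hmss
        have h3 : s / (Real.sqrt m + s) ≤ θ := by
          have hlb := log_one_add_ge hr0
          rw [← hθdef] at hlb
          have : r / (1 + r) = s / (Real.sqrt m + s) := by
            rw [hrdef]
            have hne : Real.sqrt m ≠ 0 := ne_of_gt hsm
            have hne2 : Real.sqrt m + s ≠ 0 := by positivity
            field_simp
            try ring
          linarith [hlb, this]
        have h4 : s * (Real.sqrt m + s) ≤ θ * (Real.sqrt m + s)^2 := by
          have := mul_le_mul_of_nonneg_right h3 (le_of_lt (mul_pos hb0 hb0))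
          calc s * (Real.sqrt m + s) = (s / (Real.sqrt m + s)) *
                ((Real.sqrt m + s) * (Real.sqrt m + s)) := by field_simp
            _ ≤ θ * ((Real.sqrt m + s) * (Real.sqrt m + s)) := this
            _ = θ * (Real.sqrt m + s)^2 := by ring
        have hn0 : (0:ℝ) ≤ (n:ℝ) := Nat.cast_nonneg n
        have hkey : r * m - θ * (m + u) ≤ -s^2 := by
          rw [h1, h2]
          have hexpand : s * (Real.sqrt m + s) = s * Real.sqrt m + s^2 := by ring
          linarith
        have hns : (0:ℝ) ≤ (n:ℝ) * s^2 := by positivity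
        calc (n:ℝ) * r * m - (n:ℝ) * θ * (m + u)
            = (n:ℝ) * (r * m - θ * (m + u)) := by ring
          _ ≤ (n:ℝ) * (-s^2) := mul_le_mul_of_nonneg_left hkey hn0
          _ ≤ -((n:ℝ) * s^2) / 2 := by linarith
      calc μ {ω | Real.sqrt (V ω) > Real.sqrt (∫ x, V x ∂μ) + s}
          ≤ (∫⁻ ω, g ω ∂μ) / ENNReal.ofReal (Real.exp ((n:ℝ) * θ * (m + u))) := hmarkov
        _ ≤ ENNReal.ofReal (Real.exp ((n:ℝ) * r * m)) /
              ENNReal.ofReal (Real.exp ((n:ℝ) * θ * (m + u))) := by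
            apply ENNReal.div_le_div_right
            exact hmaster
        _ = ENNReal.ofReal (Real.exp ((n:ℝ) * r * m) /
              Real.exp ((n:ℝ) * θ * (m + u))) :=
            (ENNReal.ofReal_div_of_pos (Real.exp_pos _)).symm
        _ = ENNReal.ofReal (Real.exp ((n:ℝ) * r * m - (n:ℝ) * θ * (m + u))) := by
            rw [Real.exp_sub]
        _ ≤ ENNReal.ofReal δ := ENNReal.ofReal_le_ofReal (hconc _ hexp)
end

section
/- (Sufficiency of the stopping time T*, Appendix B.) Let k ≥ 1 be an integer, δ ∈ (0,1], and 0 < p < p_1 ≤ 1 be reals. Set x = p_1/(p_1 − p)² and t* = (592/3)·x·log( (592/3)·sqrt(k/δ)·x ). Then for every real t ≥ t*, t / log( 2·sqrt(2k/δ)·t ) > (296/3)·x. -/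
set_option maxHeartbeats 1600000 in
/-- (Sufficiency of the stopping time `T*`, Appendix B.) Let `k ≥ 1`, `δ ∈ (0,1]`,
`0 < p < p₁ ≤ 1`. Set `x = p₁/(p₁−p)²` and
`t* = (592/3)·x·log((592/3)·sqrt(k/δ)·x)`. Then for every real `t ≥ t*`,
`t / log(2·sqrt(2k/δ)·t) > (296/3)·x`. -/
theorem tstar_sufficient (k : ℕ) (hk : 1 ≤ k) (δ : ℝ) (hδ0 : 0 < δ) (hδ1 : δ ≤ 1)
    (p p₁ : ℝ) (hp : 0 < p) (hpp : p < p₁) (hp1 : p₁ ≤ 1) :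
    ∀ t : ℝ,
      (592 / 3) * (p₁ / (p₁ - p) ^ 2) *
          Real.log ((592 / 3) * Real.sqrt ((k : ℝ) / δ) * (p₁ / (p₁ - p) ^ 2)) ≤ t →
      (296 / 3) * (p₁ / (p₁ - p) ^ 2) < t / Real.log (2 * Real.sqrt (2 * (k : ℝ) / δ) * t) := by
  intro t ht
  have hd : 0 < p₁ - p := sub_pos.mpr hpp
  have hx1 : 1 < p₁ / (p₁ - p) ^ 2 := by
    rw [lt_div_iff₀ (by positivity)]
    nlinarith
  set x := p₁ / (p₁ - p) ^ 2 with hxdef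
  have hx0 : 0 < x := lt_trans one_pos hx1
  have hkδ : 1 ≤ (k : ℝ) / δ := by
    rw [le_div_iff₀ hδ0]
    have : (1 : ℝ) ≤ (k : ℝ) := by exact_mod_cast hk
    linarith
  have hs1 : 1 ≤ Real.sqrt ((k : ℝ) / δ) := by
    rw [Real.one_le_sqrt]
    exact hkδ
  set s := Real.sqrt ((k : ℝ) / δ) with hsdef
  set c : ℝ := 592 / 3 with hcdef
  have hc0 : (0 : ℝ) < c := by rw [hcdef]; norm_num
  -- bounds on exp 5
  have hexp5 : Real.exp 5 = (Real.exp 1) ^ (5 : ℕ) := by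
    rw [← Real.exp_nat_mul]; norm_num
  have he5lo : (148 : ℝ) < Real.exp 5 := by
    rw [hexp5]
    calc (148 : ℝ) < 2.7182818283 ^ (5 : ℕ) := by norm_num
    _ ≤ (Real.exp 1) ^ (5 : ℕ) :=
        pow_le_pow_left₀ (by norm_num) Real.exp_one_gt_d9.le 5
  have he5hi : Real.exp 5 < c := by
    rw [hexp5, hcdef]
    calc (Real.exp 1) ^ (5 : ℕ) ≤ 2.7182818286 ^ (5 : ℕ) :=
        pow_le_pow_left₀ (Real.exp_pos 1).le Real.exp_one_lt_d9.le 5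
    _ < 592 / 3 := by norm_num
  have hsx : (1:ℝ) * 1 ≤ s * x :=
    mul_le_mul hs1 hx1.le zero_le_one (le_trans zero_le_one hs1)
  have hcsx0 : 0 < c * s * x := by positivity
  have hcsx : c ≤ c * s * x := by nlinarith
  set L := Real.log (c * s * x) with hLdef
  have hL5 : 5 ≤ L := by
    rw [hLdef, Real.le_log_iff_exp_le hcsx0]
    exact le_trans he5hi.le hcsx
  have hL0 : 0 < L := by linarith
  -- base inequality : log (2√2·L) < L
  have hsqrt2pos : (0 : ℝ) < Real.sqrt 2 := Real.sqrt_pos.mpr (by norm_num)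
  have hsqrt2lt : Real.sqrt 2 < 1.5 := by
    rw [Real.sqrt_lt' (by norm_num)]; norm_num
  have hbase : Real.log (2 * Real.sqrt 2 * L) < L := by
    rw [Real.log_lt_iff_lt_exp (by positivity)]
    have hsplit : Real.exp L = Real.exp 5 * Real.exp (L - 5) := by
      rw [← Real.exp_add]; ring_nf
    have h1 : L - 5 + 1 ≤ Real.exp (L - 5) := Real.add_one_le_exp _
    nlinarith [Real.exp_pos (L - 5)]
  -- split sqrt(2k/δ)
  have hsplitS : Real.sqrt (2 * (k : ℝ) / δ) = Real.sqrt 2 * s := by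
    rw [hsdef, mul_div_assoc, Real.sqrt_mul (by norm_num : (0 : ℝ) ≤ 2)]
  have hS1 : 1 ≤ Real.sqrt (2 * (k : ℝ) / δ) := by
    rw [hsplitS]; nlinarith [Real.sq_sqrt (by norm_num : (0 : ℝ) ≤ 2)]
  have hSpos : 0 < Real.sqrt (2 * (k : ℝ) / δ) := lt_of_lt_of_le one_pos hS1
  set T : ℝ := c * x * L with hTdef
  have hT0 : 0 < T := by positivity
  have hxL : (1:ℝ) * 1 ≤ x * L :=
    mul_le_mul hx1.le (by linarith) zero_le_one hx0.le
  have hTge : c ≤ T := by rw [hTdef]; nlinarith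
  clear_value x s c L T
  have ht0 : 0 < t := lt_of_lt_of_le hT0 ht
  -- log at the base point T
  have hAT : Real.log (2 * Real.sqrt (2 * (k : ℝ) / δ) * T) < 2 * L := by
    have heq : 2 * Real.sqrt (2 * (k : ℝ) / δ) * T
        = (2 * Real.sqrt 2 * L) * (c * s * x) := by
      rw [hsplitS, hTdef]; ring
    rw [heq, Real.log_mul (mul_pos (mul_pos two_pos hsqrt2pos) hL0).ne' hcsx0.ne', ← hLdef]
    linarith
  -- extend to arbitrary t ≥ T
  have hlogratio : Real.log (t / T) ≤ t / T - 1 :=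
    Real.log_le_sub_one_of_pos (div_pos ht0 hT0)
  have hlogsplit : Real.log (2 * Real.sqrt (2 * (k : ℝ) / δ) * t)
      = Real.log (2 * Real.sqrt (2 * (k : ℝ) / δ) * T) + Real.log (t / T) := by
    have hTt : T * (t / T) = t := by field_simp
    have heq : 2 * Real.sqrt (2 * (k : ℝ) / δ) * t
        = (2 * Real.sqrt (2 * (k : ℝ) / δ) * T) * (t / T) := by
      calc 2 * Real.sqrt (2 * (k : ℝ) / δ) * t
          = 2 * Real.sqrt (2 * (k : ℝ) / δ) * (T * (t / T)) := by rw [hTt]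
        _ = (2 * Real.sqrt (2 * (k : ℝ) / δ) * T) * (t / T) := by ring
    rw [heq, Real.log_mul (mul_pos (mul_pos two_pos hSpos) hT0).ne'
      (ne_of_gt (div_pos ht0 hT0))]
  -- positivity of log(A t)
  have hAt1 : 1 < 2 * Real.sqrt (2 * (k : ℝ) / δ) * t := by
    have ht1 : 1 < t := by rw [hcdef] at hTge; linarith
    have h1t : (1:ℝ) * t ≤ Real.sqrt (2 * (k : ℝ) / δ) * t :=
      mul_le_mul_of_nonneg_right hS1 ht0.le
    linarith
  have hlogpos : 0 < Real.log (2 * Real.sqrt (2 * (k : ℝ) / δ) * t) :=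
    Real.log_pos hAt1
  rw [lt_div_iff₀ hlogpos]
  -- final computation
  have hhalf : (296 / 3 : ℝ) * x * (2 * L) = T := by rw [hTdef, hcdef]; ring
  have hxT : (296 / 3 : ℝ) * x * 10 ≤ T := by
    rw [hTdef, hcdef]; nlinarith
  have hratio : (296 / 3 : ℝ) * x * (t / T - 1) ≤ (t - T) / 10 := by
    rw [div_sub_one (ne_of_gt hT0), ← mul_div_assoc,
      div_le_div_iff₀ hT0 (by norm_num : (0:ℝ) < 10)]
    nlinarith [sub_nonneg.mpr ht]
  have hpos296 : (0:ℝ) < 296 / 3 * x := by positivity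
  have h1 : 296 / 3 * x * Real.log (2 * Real.sqrt (2 * (k : ℝ) / δ) * T) < T := by
    calc 296 / 3 * x * Real.log (2 * Real.sqrt (2 * (k : ℝ) / δ) * T)
        < 296 / 3 * x * (2 * L) := mul_lt_mul_of_pos_left hAT hpos296
      _ = T := hhalf
  have h2 : 296 / 3 * x * Real.log (t / T) ≤ (t - T) / 10 :=
    le_trans (mul_le_mul_of_nonneg_left hlogratio hpos296.le) hratio
  have h3 : 296 / 3 * x * Real.log (2 * Real.sqrt (2 * (k : ℝ) / δ) * t)
      = 296 / 3 * x * Real.log (2 * Real.sqrt (2 * (k : ℝ) / δ) * T)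
        + 296 / 3 * x * Real.log (t / T) := by rw [hlogsplit]; ring
  linarith [h1, h2, h3]
end
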